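/- arXiv:1111.1981 — 8 statements merged into one kernel-verified Lean document; each statement's English description precedes it below -/
import Mathlib

section
/- Let M be a module over a commutative ring, equipped with a decreasing filtration (Fⁿ M)_{n∈ℤ} and an increasing filtration (Gₙ M)_{n∈ℤ}, both exhaustive (union is M) and separated. If for every n ∈ ℤ the addition map Fⁿ M ⊕ G_{n-1} M → M is an isomorphism, then there exists a grading M = ⊕_{n∈ℤ} Mⁿ (namely Mⁿ = Fⁿ M ∩ Gₙ M) such that Fⁿ M = ⊕_{i≥n} Mⁱ and Gₙ M = ⊕_{i≤n} Mⁱ for all n. -/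
section Aux

variable {R M : Type*} [CommRing R] [AddCommGroup M] [Module R M]
    (F G : ℤ → Submodule R M)

/-- disjointness F (m+1) ⊓ G m = ⊥ -/
theorem aux_disj (hcompl : ∀ n : ℤ, IsCompl (F n) (G (n - 1))) (m : ℤ) :
    Disjoint (F (m + 1)) (G m) := by
  have := (hcompl (m + 1)).disjoint
  simpa using this

theorem aux_codisj (hcompl : ∀ n : ℤ, IsCompl (F n) (G (n - 1))) (m : ℤ) :
    F (m + 1) ⊔ G m = ⊤ := by
  have := (hcompl (m + 1)).codisjoint
  simpa [codisjoint_iff] using this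

/-- F n = (F n ⊓ G n) ⊔ F (n+1) -/
theorem aux_F_step (hF : Antitone F)
    (hcompl : ∀ n : ℤ, IsCompl (F n) (G (n - 1))) (n : ℤ) :
    F n = (F n ⊓ G n) ⊔ F (n + 1) := by
  refine le_antisymm ?_ (sup_le inf_le_left (hF (by omega)))
  intro x hx
  have hx' : x ∈ F (n + 1) ⊔ G n := (aux_codisj F G hcompl n) ▸ Submodule.mem_top
  obtain ⟨a, ha, b, hb, rfl⟩ := Submodule.mem_sup.mp hx'
  have hbF : b ∈ F n := by
    have : (a + b) - a ∈ F n := Submodule.sub_mem _ hx (hF (by omega) ha)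
    simpa using this
  exact Submodule.mem_sup.mpr ⟨b, ⟨hbF, hb⟩, a, ha, by abel⟩

/-- G n = (F n ⊓ G n) ⊔ G (n-1) -/
theorem aux_G_step (hG : Monotone G)
    (hcompl : ∀ n : ℤ, IsCompl (F n) (G (n - 1))) (n : ℤ) :
    G n = (F n ⊓ G n) ⊔ G (n - 1) := by
  refine le_antisymm ?_ (sup_le inf_le_right (hG (by omega)))
  intro x hx
  have hx' : x ∈ F n ⊔ G (n - 1) := by
    have := aux_codisj F G hcompl (n - 1)
    rw [show n - 1 + 1 = n by omega] at this
    exact this ▸ Submodule.mem_top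
  obtain ⟨a, ha, b, hb, rfl⟩ := Submodule.mem_sup.mp hx'
  have haG : a ∈ G n := by
    have : (a + b) - b ∈ G n := Submodule.sub_mem _ hx (hG (by omega) hb)
    simpa using this
  exact Submodule.mem_sup.mpr ⟨a, ⟨ha, haG⟩, b, hb, rfl⟩

theorem aux_F_chain (hF : Antitone F)
    (hcompl : ∀ n : ℤ, IsCompl (F n) (G (n - 1))) (n : ℤ) :
    ∀ m, n ≤ m → F n ≤ (⨆ i ∈ Set.Ico n m, (F i ⊓ G i)) ⊔ F m := by
  refine Int.le_induction (motive := fun m _ => F n ≤ (⨆ i ∈ Set.Ico n m, (F i ⊓ G i)) ⊔ F m) ?_ ?_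
  · simp
  · intro m hm ih
    refine ih.trans (sup_le ?_ ?_)
    · refine le_sup_of_le_left (iSup₂_le fun i hi => ?_)
      obtain ⟨hi1, hi2⟩ := hi
      exact le_iSup₂_of_le i ⟨hi1, by omega⟩ le_rfl
    · rw [aux_F_step F G hF hcompl m]
      exact sup_le (le_sup_of_le_left (le_iSup₂_of_le m ⟨hm, by omega⟩ le_rfl)) le_sup_right

theorem aux_G_chain (hG : Monotone G)
    (hcompl : ∀ n : ℤ, IsCompl (F n) (G (n - 1))) (n : ℤ) :
    ∀ m, m ≤ n → G n ≤ (⨆ i ∈ Set.Ioc m n, (F i ⊓ G i)) ⊔ G m := by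
  refine Int.le_induction_down (motive := fun m _ => G n ≤ (⨆ i ∈ Set.Ioc m n, (F i ⊓ G i)) ⊔ G m) ?_ ?_
  · simp
  · intro m hm ih
    refine ih.trans (sup_le ?_ ?_)
    · refine le_sup_of_le_left (iSup₂_le fun i hi => ?_)
      obtain ⟨hi1, hi2⟩ := hi
      exact le_iSup₂_of_le i ⟨by omega, hi2⟩ le_rfl
    · rw [aux_G_step F G hG hcompl m]
      exact sup_le (le_sup_of_le_left (le_iSup₂_of_le m ⟨by omega, hm⟩ le_rfl)) le_sup_right

theorem aux_Feq (hF : Antitone F) (hG : Monotone G)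
    (hGexh : ⨆ n, G n = ⊤)
    (hcompl : ∀ n : ℤ, IsCompl (F n) (G (n - 1))) (n : ℤ) :
    F n = ⨆ i : ℤ, ⨆ _ : n ≤ i, (F i ⊓ G i) := by
  refine le_antisymm ?_ (iSup₂_le fun i hi => inf_le_left.trans (hF hi))
  intro x hx
  have hxm : ∃ m, x ∈ G m := by
    have : x ∈ ⨆ m, G m := hGexh ▸ Submodule.mem_top
    exact (Submodule.mem_iSup_of_directed _ hG.directed_le).mp this
  obtain ⟨m, hxG⟩ := hxm
  rcases lt_or_ge m n with h | h
  · have : x ∈ F (m + 1) := hF (by omega) hx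
    have hx0 : x = 0 := by
      have := (aux_disj F G hcompl m).le_bot (Submodule.mem_inf.mpr ⟨this, hxG⟩)
      simpa using this
    simp [hx0]
  · have hdec := aux_F_chain F G hF hcompl n (m + 1) (by omega) hx
    obtain ⟨y, hy, z, hz, rfl⟩ := Submodule.mem_sup.mp hdec
    have hyG : y ∈ G m := by
      refine (iSup₂_le fun i hi => ?_ : _ ≤ G m) hy
      exact inf_le_right.trans (hG (by have := hi.2; omega))
    have hzG : z ∈ G m := by
      have : (y + z) - y ∈ G m := Submodule.sub_mem _ hxG hyG
      simpa using this
    have hz0 : z = 0 := by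
      have := (aux_disj F G hcompl m).le_bot (Submodule.mem_inf.mpr ⟨hz, hzG⟩)
      simpa using this
    subst hz0
    refine Submodule.add_mem _ ?_ (Submodule.zero_mem _)
    refine (iSup₂_le fun i hi => ?_ : _ ≤ ⨆ i : ℤ, ⨆ _ : n ≤ i, (F i ⊓ G i)) hy
    exact le_iSup₂_of_le i hi.1 le_rfl

theorem aux_Geq (hF : Antitone F) (hG : Monotone G)
    (hFexh : ⨆ n, F n = ⊤)
    (hcompl : ∀ n : ℤ, IsCompl (F n) (G (n - 1))) (n : ℤ) :
    G n = ⨆ i : ℤ, ⨆ _ : i ≤ n, (F i ⊓ G i) := by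
  refine le_antisymm ?_ (iSup₂_le fun i hi => inf_le_right.trans (hG hi))
  intro x hx
  have hxm : ∃ m, x ∈ F m := by
    have : x ∈ ⨆ m, F m := hFexh ▸ Submodule.mem_top
    exact (Submodule.mem_iSup_of_directed _ hF.directed_le).mp this
  obtain ⟨m, hxF⟩ := hxm
  rcases lt_or_ge n m with h | h
  · have : x ∈ F (n + 1) := hF (by omega) hxF
    have hx0 : x = 0 := by
      have := (aux_disj F G hcompl n).le_bot (Submodule.mem_inf.mpr ⟨this, hx⟩)
      simpa using this
    simp [hx0]
  · have hdec := aux_G_chain F G hG hcompl n (m - 1) (by omega) hx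
    obtain ⟨y, hy, z, hz, rfl⟩ := Submodule.mem_sup.mp hdec
    have hyF : y ∈ F m := by
      refine (iSup₂_le fun i hi => ?_ : _ ≤ F m) hy
      exact inf_le_left.trans (hF (by have := hi.1; omega))
    have hzF : z ∈ F m := by
      have : (y + z) - y ∈ F m := Submodule.sub_mem _ hxF hyF
      simpa using this
    have hz0 : z = 0 := by
      have hd : Disjoint (F m) (G (m - 1)) := by
        have := aux_disj F G hcompl (m - 1)
        rwa [show m - 1 + 1 = m by omega] at this
      have := hd.le_bot (Submodule.mem_inf.mpr ⟨hzF, hz⟩)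
      simpa using this
    subst hz0
    refine Submodule.add_mem _ ?_ (Submodule.zero_mem _)
    refine (iSup₂_le fun i hi => ?_ : _ ≤ ⨆ i : ℤ, ⨆ _ : i ≤ n, (F i ⊓ G i)) hy
    exact le_iSup₂_of_le i hi.2 le_rfl

end Aux

/-- **Opposite filtrations from complementarity.**
Let `M` be a module over a commutative ring with a decreasing filtration `F` and an
increasing filtration `G`, both exhaustive and separated. If for every `n` the addition
map `F n ⊕ G (n-1) → M` is an isomorphism (i.e. `F n` and `G (n-1)` are complementary
submodules), then the submodules `Mⁿ := F n ⊓ G n` form a grading of `M` such that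
`F n = ⨆ i ≥ n, Mⁱ` and `G n = ⨆ i ≤ n, Mⁱ`. -/
theorem statement0 {R M : Type*} [CommRing R] [AddCommGroup M] [Module R M]
    (F G : ℤ → Submodule R M)
    (hF : Antitone F) (hG : Monotone G)
    (hFexh : ⨆ n, F n = ⊤) (hFsep : ⨅ n, F n = ⊥)
    (hGexh : ⨆ n, G n = ⊤) (hGsep : ⨅ n, G n = ⊥)
    (hcompl : ∀ n : ℤ, IsCompl (F n) (G (n - 1))) :
    DirectSum.IsInternal (fun n : ℤ => F n ⊓ G n) ∧
      (∀ n : ℤ, F n = ⨆ i : ℤ, ⨆ _ : n ≤ i, (F i ⊓ G i)) ∧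
      (∀ n : ℤ, G n = ⨆ i : ℤ, ⨆ _ : i ≤ n, (F i ⊓ G i)) := by
  refine ⟨?_, aux_Feq F G hF hG hGexh hcompl, aux_Geq F G hF hG hFexh hcompl⟩
  rw [DirectSum.isInternal_submodule_iff_iSupIndep_and_iSup_eq_top]
  constructor
  · intro n
    have hle : (⨆ i : ℤ, ⨆ _ : i ≠ n, (F i ⊓ G i)) ≤ F (n + 1) ⊔ G (n - 1) := by
      refine iSup₂_le fun i hi => ?_
      rcases lt_or_gt_of_ne hi with h | h
      · exact le_sup_of_le_right (inf_le_right.trans (hG (by omega)))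
      · exact le_sup_of_le_left (inf_le_left.trans (hF (by omega)))
    refine Disjoint.mono_right hle ?_
    rw [disjoint_iff_inf_le]
    intro x hx
    obtain ⟨hxM, hxR⟩ := Submodule.mem_inf.mp hx
    obtain ⟨a, ha, b, hb, rfl⟩ := Submodule.mem_sup.mp hxR
    have hbF : b ∈ F n := by
      have : (a + b) - a ∈ F n := Submodule.sub_mem _ hxM.1 (hF (by omega) ha)
      simpa using this
    have hb0 : b = 0 := by
      have := (hcompl n).disjoint.le_bot (Submodule.mem_inf.mpr ⟨hbF, hb⟩)
      simpa using this
    subst hb0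
    have ha0 : a = 0 := by
      have haG : a ∈ G n := by simpa using hxM.2
      have := (aux_disj F G hcompl n).le_bot (Submodule.mem_inf.mpr ⟨by simpa using ha, haG⟩)
      simpa using this
    simp [ha0]
  · refine le_antisymm le_top ?_
    rw [← hGexh]
    refine iSup_le fun n => ?_
    rw [aux_Geq F G hF hG hFexh hcompl n]
    exact iSup₂_le fun i _ => le_iSup (fun i : ℤ => F i ⊓ G i) i
end

section
/- Let M be a module with a decreasing filtration (Fⁿ M) and an increasing filtration (Gₙ M), and suppose for all n the addition map Fⁿ M ⊕ G_{n-1} M → M is an isomorphism. Then for all integers a ≤ b one has Fᵃ M ∩ G_b M = ⊕_{a ≤ n ≤ b} (Fⁿ M ∩ Gₙ M) (an internal direct sum). -/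
theorem aux_key {R M : Type*} [CommRing R] [AddCommGroup M] [Module R M]
    (F G : ℤ → Submodule R M) (hF : Antitone F) (hG : Monotone G)
    (hcompl : ∀ n : ℤ, IsCompl (F n) (G (n - 1))) (a b : ℤ) (hab : a ≤ b) :
    F a ⊓ G b = (F a ⊓ G (b - 1)) ⊔ (F b ⊓ G b) := by
  apply le_antisymm
  · intro x hx
    obtain ⟨hxF, hxG⟩ := hx
    have htop : F b ⊔ G (b - 1) = ⊤ := (hcompl b).sup_eq_top
    have : x ∈ F b ⊔ G (b - 1) := by rw [htop]; trivial
    obtain ⟨y, hy, z, hz, hyz⟩ := Submodule.mem_sup.mp this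
    have hzF : z ∈ F a := by
      have : z = x - y := by rw [← hyz]; abel
      rw [this]
      exact sub_mem hxF (hF hab hy)
    have hyG : y ∈ G b := by
      have : y = x - z := by rw [← hyz]; abel
      rw [this]
      exact sub_mem hxG (hG (by omega) hz)
    exact Submodule.mem_sup.mpr ⟨z, ⟨hzF, hz⟩, y, ⟨hy, hyG⟩, by rw [← hyz]; abel⟩
  · apply sup_le
    · exact inf_le_inf le_rfl (hG (by omega))
    · exact inf_le_inf (hF hab) le_rfl

/-- If the addition maps `F n ⊕ G (n-1) → M` are isomorphisms for all `n`, then for all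
integers `a ≤ b` one has `Fᵃ M ∩ G_b M = ⊕_{a ≤ n ≤ b} (Fⁿ M ∩ Gₙ M)` as an internal
direct sum: the submodules `F n ⊓ G n` are independent and their supremum over
`a ≤ n ≤ b` is `F a ⊓ G b`. -/
theorem statement2 {R M : Type*} [CommRing R] [AddCommGroup M] [Module R M]
    (F G : ℤ → Submodule R M)
    (hF : Antitone F) (hG : Monotone G)
    (hFexh : ⨆ n, F n = ⊤) (hFsep : ⨅ n, F n = ⊥)
    (hGexh : ⨆ n, G n = ⊤) (hGsep : ⨅ n, G n = ⊥)
    (hcompl : ∀ n : ℤ, IsCompl (F n) (G (n - 1))) :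
    iSupIndep (fun n : ℤ => F n ⊓ G n) ∧
      ∀ a b : ℤ, a ≤ b → F a ⊓ G b = ⨆ n ∈ Set.Icc a b, (F n ⊓ G n) := by
  have hdisj : ∀ n : ℤ, F n ⊓ G (n - 1) = ⊥ := fun n => (hcompl n).disjoint.eq_bot
  constructor
  · intro i
    have hle : (⨆ j ≠ i, (F j ⊓ G j)) ≤ F (i + 1) ⊔ G (i - 1) := by
      apply iSup₂_le
      intro j hj
      rcases lt_or_gt_of_ne hj with h | h
      · exact le_trans (le_trans inf_le_right (hG (by omega))) le_sup_right
      · exact le_trans (le_trans inf_le_left (hF (by omega))) le_sup_left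
    apply Disjoint.mono_right hle
    rw [disjoint_iff, eq_bot_iff]
    intro x hx
    obtain ⟨⟨hxF, hxG⟩, hx2⟩ := hx
    obtain ⟨y, hy, z, hz, hyz⟩ := Submodule.mem_sup.mp hx2
    have hz0 : z ∈ F i ⊓ G (i - 1) := by
      constructor
      · have : z = x - y := by rw [← hyz]; abel
        rw [this]; exact sub_mem hxF (hF (by omega) hy)
      · exact hz
    rw [hdisj i] at hz0
    have hz0' : z = 0 := hz0
    have hxy : x = y := by rw [← hyz, hz0', add_zero]
    have : x ∈ F (i + 1) ⊓ G ((i + 1) - 1) := by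
      constructor
      · rw [hxy]; exact hy
      · simpa using hxG
    rw [hdisj (i + 1)] at this
    exact this
  · intro a b hab
    refine Int.le_induction (motive := fun b _ => F a ⊓ G b = ⨆ n ∈ Set.Icc a b, F n ⊓ G n) ?_ ?_ b hab
    · show F a ⊓ G a = ⨆ n ∈ Set.Icc a a, F n ⊓ G n
      rw [Set.Icc_self]
      simp
    · intro b hb ih
      show F a ⊓ G (b+1) = ⨆ n ∈ Set.Icc a (b+1), F n ⊓ G n
      have hIcc : Set.Icc a (b + 1) = insert (b + 1) (Set.Icc a b) := by
        ext x; simp only [Set.mem_Icc, Set.mem_insert_iff]; omega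
      rw [hIcc, iSup_insert, ← ih]
      have := aux_key F G hF hG hcompl a (b + 1) (by omega)
      simp only [add_sub_cancel_right] at this
      rw [this, sup_comm]
end

section
/- Let (G_i)_{i∈I} be an inverse system of groups over a poset I. There is a bijection between the set of isomorphism classes of (G_i)-torsors (inverse systems of sets (X_i) with each X_i a simply transitive left G_i-set and equivariant transition maps) and the pointed set lim¹_{i∈I} G_i, under which the trivial torsor (G_i acting on itself by left multiplication) corresponds to the distinguished point. In particular, a (G_i)-torsor (X_i) has lim_{i∈I} X_i ≠ ∅ if and only if its class in lim¹ G_i is the distinguished point. -/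
section
universe u v

variable {I : Type u} [PartialOrder I] (G : I → Type v) [∀ i, Group (G i)]
  (π : ∀ ⦃j i : I⦄, j ≤ i → (G i →* G j))

/-- A torsor under an inverse system of groups `(G i)` with transition maps `π`:
an inverse system of nonempty sets `(X i)` with simply transitive left `G i`-actions
and equivariant transition maps. -/
structure InvSysTorsor where
  X : I → Type v
  act : ∀ i, G i → X i → X i
  act_one : ∀ i (x : X i), act i 1 x = x
  act_mul : ∀ i (g h : G i) (x : X i), act i (g * h) x = act i g (act i h x)
  nonempty : ∀ i, Nonempty (X i)
  simplyTrans : ∀ i (x y : X i), ∃! g : G i, act i g x = y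
  map : ∀ ⦃j i : I⦄, j ≤ i → X i → X j
  map_refl : ∀ (i : I) (h : i ≤ i) (x : X i), map h x = x
  map_trans : ∀ ⦃k j i : I⦄ (hkj : k ≤ j) (hji : j ≤ i) (x : X i),
    map hkj (map hji x) = map (hkj.trans hji) x
  equivariant : ∀ ⦃j i : I⦄ (h : j ≤ i) (g : G i) (x : X i),
    map h (act i g x) = act j (π h g) (map h x)

/-- Two torsors are related if there is an equivariant morphism of inverse systems
between them (such a morphism is automatically an isomorphism). -/
def TorsorRel (T T' : InvSysTorsor G π) : Prop :=
  ∃ φ : ∀ i, T.X i → T'.X i,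
    (∀ i (g : G i) (x : T.X i), φ i (T.act i g x) = T'.act i g (φ i x)) ∧
    (∀ ⦃j i : I⦄ (h : j ≤ i) (x : T.X i), φ j (T.map h x) = T'.map h (φ i x))

/-- The trivial torsor: `G i` acting on itself by left multiplication. -/
def trivialTorsor
    (hπrefl : ∀ (i : I) (h : i ≤ i), π h = MonoidHom.id (G i))
    (hπtrans : ∀ ⦃k j i : I⦄ (hkj : k ≤ j) (hji : j ≤ i) (x : G i),
      π hkj (π hji x) = π (hkj.trans hji) x) :
    InvSysTorsor G π where
  X := G
  act i g x := g * x
  act_one i x := one_mul x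
  act_mul i g h x := mul_assoc g h x
  nonempty i := ⟨1⟩
  simplyTrans i x y :=
    ⟨y * x⁻¹, inv_mul_cancel_right y x, fun g hg => eq_mul_inv_of_mul_eq hg⟩
  map _ _ h x := π h x
  map_refl i h x := by show π h x = x; rw [hπrefl i h]; rfl
  map_trans _ _ _ hkj hji x := hπtrans hkj hji x
  equivariant _ _ h g x := map_mul (π h) g x

/-- The set `Z` of cocycles: families `(g_j^i ∈ G j)_{j ≤ i}` with
`g_k^i = π_k^j(g_j^i) · g_k^j`. -/
def Cocycle : Type (max u v) :=
  {z : ∀ ⦃j i : I⦄, j ≤ i → G j //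
    ∀ ⦃k j i : I⦄ (hkj : k ≤ j) (hji : j ≤ i),
      z (hkj.trans hji) = π hkj (z hji) * z hkj}

/-- The coboundary relation on cocycles: the action of `∏ᵢ G i` by
`(b_i)·(g_j^i) = (π_j^i(b_i)·g_j^i·b_j⁻¹)`. -/
def CobRel (z z' : Cocycle G π) : Prop :=
  ∃ b : ∀ i, G i, ∀ ⦃j i : I⦄ (h : j ≤ i),
    z'.1 h = π h (b i) * z.1 h * (b j)⁻¹

/-- `lim¹` of the inverse system: the quotient of the set of cocycles by
coboundaries. -/
def lim1 : Type (max u v) := Quot (CobRel G π)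

/-- The distinguished point of `lim¹`: the class of the identity cocycle. -/
def lim1Base : lim1 G π :=
  Quot.mk _ ⟨fun _ _ _ => 1, fun _ _ _ _ _ => by simp⟩

section Aux
variable {G} {π}

/-- The unique group element carrying `x` to `y` in a torsor fiber. -/
noncomputable def InvSysTorsor.tdiv (T : InvSysTorsor G π) (i : I) (x y : T.X i) : G i :=
  (T.simplyTrans i x y).choose

theorem InvSysTorsor.tdiv_spec (T : InvSysTorsor G π) (i : I) (x y : T.X i) :
    T.act i (T.tdiv i x y) x = y := (T.simplyTrans i x y).choose_spec.1

theorem InvSysTorsor.tdiv_unique (T : InvSysTorsor G π) {i : I} {x y : T.X i} {g : G i}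
    (h : T.act i g x = y) : g = T.tdiv i x y :=
  (T.simplyTrans i x y).choose_spec.2 g h

theorem InvSysTorsor.act_inv_act (T : InvSysTorsor G π) {i : I} (g : G i) (x : T.X i) :
    T.act i g⁻¹ (T.act i g x) = x := by
  rw [← T.act_mul, inv_mul_cancel, T.act_one]

/-- The cocycle associated to a torsor and a choice of basepoints. -/
noncomputable def InvSysTorsor.cocycleOf (T : InvSysTorsor G π) (x : ∀ i, T.X i) :
    Cocycle G π :=
  ⟨fun j i h => T.tdiv j (x j) (T.map h (x i)), by
    intro k j i hkj hji
    refine (T.tdiv_unique ?_).symm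
    rw [T.act_mul, T.tdiv_spec, ← T.equivariant, T.tdiv_spec, T.map_trans]⟩

theorem InvSysTorsor.cocycleOf_spec (T : InvSysTorsor G π) (x : ∀ i, T.X i)
    {j i : I} (h : j ≤ i) :
    T.act j ((T.cocycleOf x).1 h) (x j) = T.map h (x i) := T.tdiv_spec _ _ _

/-- Changing basepoints changes the cocycle by a coboundary. -/
theorem InvSysTorsor.cobRel_cocycleOf (T : InvSysTorsor G π) (x c : ∀ i, T.X i) :
    CobRel G π (T.cocycleOf x) (T.cocycleOf c) := by
  refine ⟨fun i => T.tdiv i (x i) (c i), fun j i h => ?_⟩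
  refine (T.tdiv_unique ?_).symm
  have hx : T.act j (T.tdiv j (x j) (c j))⁻¹ (c j) = x j := by
    have h0 := T.act_inv_act (T.tdiv j (x j) (c j)) (x j)
    rwa [T.tdiv_spec] at h0
  rw [T.act_mul, hx, T.act_mul, T.cocycleOf_spec, ← T.equivariant, T.tdiv_spec]

theorem cobRel_equivalence : Equivalence (CobRel G π) := by
  constructor
  · exact fun z => ⟨fun _ => 1, fun j i h => by simp⟩
  · rintro z z' ⟨b, hb⟩
    refine ⟨fun i => (b i)⁻¹, fun j i h => ?_⟩
    rw [hb h, map_inv]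
    group
  · rintro z z' z'' ⟨b, hb⟩ ⟨b', hb'⟩
    refine ⟨fun i => b' i * b i, fun j i h => ?_⟩
    rw [hb' h, hb h, map_mul]
    group

/-- The torsor associated to a cocycle: `G i` with left multiplication, with
transition maps twisted by the cocycle. -/
@[reducible] def torsorOfCocycle
    (hπrefl : ∀ (i : I) (h : i ≤ i), π h = MonoidHom.id (G i))
    (hπtrans : ∀ ⦃k j i : I⦄ (hkj : k ≤ j) (hji : j ≤ i) (x : G i),
      π hkj (π hji x) = π (hkj.trans hji) x)
    (z : Cocycle G π) : InvSysTorsor G π where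
  X := G
  act i g x := g * x
  act_one i x := one_mul x
  act_mul i g h x := mul_assoc g h x
  nonempty i := ⟨1⟩
  simplyTrans i x y :=
    ⟨y * x⁻¹, inv_mul_cancel_right y x, fun g hg => eq_mul_inv_of_mul_eq hg⟩
  map j i h x := π h x * z.1 h
  map_refl i h x := by
    have h1 : z.1 h = 1 := by
      have hz := z.2 h h
      rw [hπrefl i h] at hz
      simp only [MonoidHom.id_apply] at hz
      exact (left_eq_mul.mp hz)
    show π h x * z.1 h = x
    rw [h1, hπrefl i h, mul_one, MonoidHom.id_apply]
  map_trans k j i hkj hji x := by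
    show π hkj (π hji x * z.1 hji) * z.1 hkj = π (hkj.trans hji) x * z.1 (hkj.trans hji)
    rw [map_mul, hπtrans, z.2 hkj hji, mul_assoc]
  equivariant j i h g x := by
    show π h (g * x) * z.1 h = π h g * (π h x * z.1 h)
    rw [map_mul, mul_assoc]

end Aux


section Aux2
variable {G} {π}
variable (hπrefl : ∀ (i : I) (h : i ≤ i), π h = MonoidHom.id (G i))
  (hπtrans : ∀ ⦃k j i : I⦄ (hkj : k ≤ j) (hji : j ≤ i) (x : G i),
    π hkj (π hji x) = π (hkj.trans hji) x)

/-- A choice of basepoints in a torsor. -/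
noncomputable def basept (T : InvSysTorsor G π) : ∀ i, T.X i :=
  fun i => (T.nonempty i).some

/-- The class in `lim¹` of the cocycle of a torsor. -/
noncomputable def fmap (T : InvSysTorsor G π) : lim1 G π :=
  Quot.mk _ (T.cocycleOf (basept T))

theorem fmap_wd (T T' : InvSysTorsor G π) (hTT' : TorsorRel G π T T') :
    fmap T = fmap T' := by
  obtain ⟨φ, hact, hmap⟩ := hTT'
  have key : T.cocycleOf (basept T) = T'.cocycleOf (fun i => φ i (basept T i)) := by
    apply Subtype.ext
    funext j i h
    refine T'.tdiv_unique ?_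
    rw [← hact, T.cocycleOf_spec, hmap]
  show Quot.mk _ (T.cocycleOf (basept T)) = Quot.mk _ (T'.cocycleOf (basept T'))
  rw [key]
  exact Quot.sound (T'.cobRel_cocycleOf _ _)

/-- The forward map of the classification bijection. -/
noncomputable def Fq : Quot (TorsorRel G π) → lim1 G π :=
  Quot.lift fmap fmap_wd

/-- The class of the torsor attached to a cocycle. -/
noncomputable def gmap (z : Cocycle G π) : Quot (TorsorRel G π) :=
  Quot.mk _ (torsorOfCocycle hπrefl hπtrans z)

theorem gmap_wd (z z' : Cocycle G π) (hzz' : CobRel G π z z') :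
    gmap hπrefl hπtrans z = gmap hπrefl hπtrans z' := by
  obtain ⟨b, hb⟩ := hzz'
  refine Quot.sound ⟨fun i x => x * (b i)⁻¹, fun i g x => mul_assoc g x _,
    fun j i h x => ?_⟩
  show π h x * z.1 h * (b j)⁻¹ = π h (x * (b i)⁻¹) * z'.1 h
  rw [hb h, map_mul, map_inv]
  group

/-- The inverse map of the classification bijection. -/
noncomputable def Gq : lim1 G π → Quot (TorsorRel G π) :=
  Quot.lift (gmap hπrefl hπtrans) (gmap_wd hπrefl hπtrans)

theorem Gq_Fq (q : Quot (TorsorRel G π)) : Gq hπrefl hπtrans (Fq q) = q := by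
  induction q using Quot.ind with | _ T => ?_
  show gmap hπrefl hπtrans (T.cocycleOf (basept T)) = Quot.mk _ T
  refine Quot.sound ⟨fun i gi => T.act i gi (basept T i),
    fun i a b => T.act_mul i a b _, fun j i h x => ?_⟩
  show T.act j (π h x * (T.cocycleOf (basept T)).1 h) (basept T j)
      = T.map h (T.act i x (basept T i))
  rw [T.act_mul, T.cocycleOf_spec, T.equivariant]

theorem Fq_Gq (q : lim1 G π) : Fq (Gq hπrefl hπtrans q) = q := by
  induction q using Quot.ind with | _ z => ?_
  show fmap (torsorOfCocycle hπrefl hπtrans z) = Quot.mk _ z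
  set T := torsorOfCocycle hπrefl hπtrans z with hT
  refine Quot.sound ⟨fun i => ((basept T i : G i))⁻¹, fun j i h => ?_⟩
  have hc : (T.cocycleOf (basept T)).1 h * (basept T j : G j)
      = π h (basept T i : G i) * z.1 h := T.cocycleOf_spec (basept T) h
  have hz : (T.cocycleOf (basept T)).1 h
      = π h (basept T i : G i) * z.1 h * ((basept T j : G j))⁻¹ :=
    eq_mul_inv_of_mul_eq hc
  rw [map_inv, hz]
  group

theorem fmap_eq_base (T : InvSysTorsor G π) (x : ∀ i, T.X i)
    (hx : ∀ ⦃j i : I⦄ (h : j ≤ i), T.map h (x i) = x j) :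
    fmap T = lim1Base G π := by
  have h1 : CobRel G π (T.cocycleOf x)
      ⟨fun _ _ _ => 1, fun _ _ _ _ _ => by simp⟩ := by
    refine ⟨fun _ => 1, fun j i h => ?_⟩
    have h2 : (1 : G j) = (T.cocycleOf x).1 h := by
      refine T.tdiv_unique ?_
      rw [T.act_one, hx]
    show (1 : G j) = π h (1 : G i) * (T.cocycleOf x).1 h * (1 : G j)⁻¹
    simp [← h2]
  calc fmap T = (show lim1 G π from Quot.mk (CobRel G π) (T.cocycleOf x)) :=
        Quot.sound (T.cobRel_cocycleOf _ _)
    _ = lim1Base G π := Quot.sound h1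

theorem exists_sec_of_fmap_eq_base (T : InvSysTorsor G π)
    (he : fmap T = lim1Base G π) :
    ∃ x : ∀ i, T.X i, ∀ ⦃j i : I⦄ (h : j ≤ i), T.map h (x i) = x j := by
  have he' : CobRel G π (T.cocycleOf (basept T))
      ⟨fun _ _ _ => 1, fun _ _ _ _ _ => by simp⟩ :=
    (cobRel_equivalence.eqvGen_iff).mp (Quot.eq.mp he)
  obtain ⟨b, hb⟩ := he'
  refine ⟨fun i => T.act i (b i) (basept T i), fun j i h => ?_⟩
  have h3 : (1 : G j) = π h (b i) * (T.cocycleOf (basept T)).1 h * (b j)⁻¹ := hb h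
  have h4 : π h (b i) * (T.cocycleOf (basept T)).1 h = b j :=
    mul_inv_eq_one.mp h3.symm
  have hz : (T.cocycleOf (basept T)).1 h = (π h (b i))⁻¹ * b j :=
    eq_inv_mul_of_mul_eq h4
  rw [T.equivariant, ← T.cocycleOf_spec (basept T) h, ← T.act_mul, hz]
  congr 1
  group

end Aux2

/-- **Classification of torsors under an inverse system of groups by `lim¹`.**
There is a bijection between the set of isomorphism classes of `(G i)`-torsors and
the pointed set `lim¹ G i`, sending the class of the trivial torsor to the
distinguished point; moreover a torsor admits a compatible family of points
(i.e. `lim X i ≠ ∅`) if and only if its class corresponds to the distinguished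
point. -/
theorem statement7
    (hπrefl : ∀ (i : I) (h : i ≤ i), π h = MonoidHom.id (G i))
    (hπtrans : ∀ ⦃k j i : I⦄ (hkj : k ≤ j) (hji : j ≤ i) (x : G i),
      π hkj (π hji x) = π (hkj.trans hji) x) :
    ∃ e : Quot (TorsorRel G π) ≃ lim1 G π,
      e (Quot.mk _ (trivialTorsor G π hπrefl hπtrans)) = lim1Base G π ∧
      ∀ T : InvSysTorsor G π,
        ((∃ x : ∀ i, T.X i, ∀ ⦃j i : I⦄ (h : j ≤ i), T.map h (x i) = x j) ↔
          e (Quot.mk _ T) = lim1Base G π) := by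
  refine ⟨⟨Fq, Gq hπrefl hπtrans, Gq_Fq hπrefl hπtrans, Fq_Gq hπrefl hπtrans⟩, ?_, ?_⟩
  · show fmap (trivialTorsor G π hπrefl hπtrans) = lim1Base G π
    refine fmap_eq_base _ (fun i => ((1 : G i) : (trivialTorsor G π hπrefl hπtrans).X i)) (fun j i h => ?_)
    show π h (1 : G i) = (1 : G j)
    simp
  · intro T
    constructor
    · rintro ⟨x, hx⟩
      show fmap T = lim1Base G π
      exact fmap_eq_base T x hx
    · intro he
      exact exists_sec_of_fmap_eq_base T he

end
end

section
/- Let R be a commutative ring whose spectrum has finitely many connected components (e.g. R with finitely many idempotents), and let (M_i)_{i∈I} be an inverse system of R-modules indexed by a lattice I such that: (1) each M_i is finitely generated projective; (2) all transition maps μ_j^i : M_i → M_j (j ≤ i) are surjective; (3) for all i, j the square with vertices M_{i∨j}, M_i, M_j, M_{i∧j} is Cartesian. Then lim¹_{i∈I} M_i = 0, i.e. every torsor under the inverse system (M_i) admits a compatible family of points (lim of the torsor is nonempty). -/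
open Module TensorProduct

section RankAux

variable {R : Type*} [CommRing R]

/-- Upgrade an `R`-linear equivalence between modules over a localization of `R` to a
linear equivalence over the localization. -/
noncomputable def LinearEquiv.extendScalarsOfIsLocalization' (S : Submonoid R) (A : Type*)
    [CommRing A] [Algebra R A] [IsLocalization S A] {N₁ N₂ : Type*}
    [AddCommGroup N₁] [Module R N₁] [Module A N₁] [IsScalarTower R A N₁]
    [AddCommGroup N₂] [Module R N₂] [Module A N₂] [IsScalarTower R A N₂]
    (e : N₁ ≃ₗ[R] N₂) : N₁ ≃ₗ[A] N₂ :=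
  LinearEquiv.ofLinear (e.toLinearMap.extendScalarsOfIsLocalization S A)
    (e.symm.toLinearMap.extendScalarsOfIsLocalization S A)
    (by ext x; simp) (by ext x; simp)

/-- The localized module at a prime is the base change. -/
noncomputable def locTensorEquiv (p : PrimeSpectrum R) (N : Type*) [AddCommGroup N]
    [Module R N] :
    LocalizedModule p.asIdeal.primeCompl N ≃ₗ[R] Localization.AtPrime p.asIdeal ⊗[R] N :=
  haveI := (isLocalizedModule_iff_isBaseChange p.asIdeal.primeCompl
      (Localization.AtPrime p.asIdeal) _).mpr
      (TensorProduct.isBaseChange R N (Localization.AtPrime p.asIdeal))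
  IsLocalizedModule.iso p.asIdeal.primeCompl
    (TensorProduct.mk R (Localization.AtPrime p.asIdeal) N 1)

lemma rankAtStalk_eq_finrank_tensor (p : PrimeSpectrum R) (N : Type*) [AddCommGroup N]
    [Module R N] :
    rankAtStalk (R := R) N p
      = finrank (Localization.AtPrime p.asIdeal) (Localization.AtPrime p.asIdeal ⊗[R] N) :=
  ((locTensorEquiv p N).extendScalarsOfIsLocalization' p.asIdeal.primeCompl _).finrank_eq

lemma freeTensor (p : PrimeSpectrum R) (N : Type*) [AddCommGroup N] [Module R N]
    [Module.Finite R N] [Module.Projective R N] :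
    Module.Free (Localization.AtPrime p.asIdeal) (Localization.AtPrime p.asIdeal ⊗[R] N) := by
  haveI : Module.FinitePresentation (Localization.AtPrime p.asIdeal)
      (Localization.AtPrime p.asIdeal ⊗[R] N) := Module.finitePresentation_of_projective _ _
  exact Module.free_of_flat_of_isLocalRing

lemma rankAtStalk_prod_eq (p : PrimeSpectrum R) (A B : Type*)
    [AddCommGroup A] [Module R A] [AddCommGroup B] [Module R B]
    [Module.Finite R A] [Module.Projective R A] [Module.Finite R B] [Module.Projective R B] :
    rankAtStalk (R := R) (A × B) p = rankAtStalk (R := R) A p + rankAtStalk (R := R) B p := by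
  rw [rankAtStalk_eq_finrank_tensor, rankAtStalk_eq_finrank_tensor,
    rankAtStalk_eq_finrank_tensor]
  haveI := freeTensor p A
  haveI := freeTensor p B
  rw [((TensorProduct.prodRight R R (Localization.AtPrime p.asIdeal) A
    B).extendScalarsOfIsLocalization' p.asIdeal.primeCompl _).finrank_eq]
  exact Module.finrank_prod

lemma rankAtStalk_congr (p : PrimeSpectrum R) {A B : Type*}
    [AddCommGroup A] [Module R A] [AddCommGroup B] [Module R B] (e : A ≃ₗ[R] B) :
    rankAtStalk (R := R) A p = rankAtStalk (R := R) B p := by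
  rw [rankAtStalk_eq_finrank_tensor, rankAtStalk_eq_finrank_tensor]
  exact ((TensorProduct.congr (LinearEquiv.refl R (Localization.AtPrime p.asIdeal))
    e).extendScalarsOfIsLocalization' p.asIdeal.primeCompl _).finrank_eq

lemma subsingleton_of_rankAtStalk_eq_zero (N : Type*) [AddCommGroup N] [Module R N]
    [Module.Finite R N] [Module.Projective R N]
    (h : ∀ p : PrimeSpectrum R, rankAtStalk (R := R) N p = 0) : Subsingleton N := by
  rw [← Module.support_eq_empty_iff (R := R), Set.eq_empty_iff_forall_notMem]
  intro p hp
  haveI := freeTensor p N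
  have h0 : finrank (Localization.AtPrime p.asIdeal)
      (Localization.AtPrime p.asIdeal ⊗[R] N) = 0 := by
    rw [← rankAtStalk_eq_finrank_tensor]; exact h p
  haveI : Subsingleton (Localization.AtPrime p.asIdeal ⊗[R] N) := by
    rw [Module.finrank_eq_card_chooseBasisIndex] at h0
    haveI : IsEmpty (Module.Free.ChooseBasisIndex (Localization.AtPrime p.asIdeal)
        (Localization.AtPrime p.asIdeal ⊗[R] N)) := Fintype.card_eq_zero_iff.mp h0
    have b := Module.Free.chooseBasis (Localization.AtPrime p.asIdeal)
      (Localization.AtPrime p.asIdeal ⊗[R] N)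
    haveI : Subsingleton ((Module.Free.ChooseBasisIndex (Localization.AtPrime p.asIdeal)
        (Localization.AtPrime p.asIdeal ⊗[R] N)) →₀ Localization.AtPrime p.asIdeal) :=
      ⟨fun f g => Finsupp.ext fun i => isEmptyElim i⟩
    exact b.repr.toEquiv.subsingleton
  exact (Module.notMem_support_iff.mpr ((locTensorEquiv p N).toEquiv.subsingleton)) hp

lemma rankAtStalk_eq_of_connComp {N : Type*} [AddCommGroup N] [Module R N]
    [Module.Finite R N] [Module.Projective R N] {p q : PrimeSpectrum R}
    (h : (p : ConnectedComponents (PrimeSpectrum R)) = q) :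
    rankAtStalk (R := R) N p = rankAtStalk (R := R) N q := by
  haveI : Module.FinitePresentation R N := Module.finitePresentation_of_projective _ _
  exact (Module.isLocallyConstant_rankAtStalk (R := R) (M := N)).apply_eq_of_isPreconnected
    isPreconnected_connectedComponent (ConnectedComponents.coe_eq_coe'.mp h)
    mem_connectedComponent

end RankAux

section MeasureAux

variable (R : Type*) [CommRing R] [Fintype (ConnectedComponents (PrimeSpectrum R))]

/-- A choice of representative point in each connected component of `Spec R`. -/
noncomputable def repPt (c : ConnectedComponents (PrimeSpectrum R)) : PrimeSpectrum R :=
  Function.surjInv ConnectedComponents.surjective_coe c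

omit [Fintype (ConnectedComponents (PrimeSpectrum R))] in
lemma repPt_spec (c : ConnectedComponents (PrimeSpectrum R)) :
    ((repPt R c : PrimeSpectrum R) : ConnectedComponents (PrimeSpectrum R)) = c :=
  Function.surjInv_eq ConnectedComponents.surjective_coe c

/-- Total rank: the sum of the ranks at one point of each connected component. -/
noncomputable def totRank (N : Type*) [AddCommGroup N] [Module R N] : ℕ :=
  ∑ c : ConnectedComponents (PrimeSpectrum R), rankAtStalk (R := R) N (repPt R c)

variable {R}

lemma totRank_eq_of_equiv {A B : Type*} [AddCommGroup A] [Module R A] [AddCommGroup B]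
    [Module R B] (e : A ≃ₗ[R] B) : totRank R A = totRank R B :=
  Finset.sum_congr rfl fun c _ => rankAtStalk_congr _ e

lemma totRank_eq_add_of_equiv {X A B : Type*} [AddCommGroup X] [Module R X]
    [AddCommGroup A] [Module R A] [AddCommGroup B] [Module R B]
    [Module.Finite R A] [Module.Projective R A] [Module.Finite R B] [Module.Projective R B]
    (e : X ≃ₗ[R] A × B) : totRank R X = totRank R A + totRank R B :=
  calc totRank R X = totRank R (A × B) := totRank_eq_of_equiv e
    _ = ∑ c : ConnectedComponents (PrimeSpectrum R),
          (rankAtStalk (R := R) A (repPt R c) + rankAtStalk (R := R) B (repPt R c)) :=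
        Finset.sum_congr rfl fun c _ => rankAtStalk_prod_eq (repPt R c) A B
    _ = totRank R A + totRank R B := Finset.sum_add_distrib

lemma subsingleton_of_totRank_eq_zero (N : Type*) [AddCommGroup N] [Module R N]
    [Module.Finite R N] [Module.Projective R N] (h : totRank R N = 0) : Subsingleton N := by
  refine subsingleton_of_rankAtStalk_eq_zero (R := R) N fun p => ?_
  have h1 : rankAtStalk (R := R) N p
      = rankAtStalk (R := R) N (repPt R (p : ConnectedComponents (PrimeSpectrum R))) :=
    rankAtStalk_eq_of_connComp (N := N) (repPt_spec R _).symm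
  rw [h1]
  exact Finset.sum_eq_zero_iff.mp h _ (Finset.mem_univ _)

end MeasureAux

section SplitAux

variable {R : Type*} [CommRing R]
variable {A B : Type*} [AddCommGroup A] [Module R A] [AddCommGroup B] [Module R B]

/-- A retraction onto the kernel of a split surjection. -/
noncomputable def kerRetraction [Module.Projective R B] (phi : A →ₗ[R] B)
    (hphi : Function.Surjective phi) : A →ₗ[R] LinearMap.ker phi :=
  LinearMap.codRestrict (LinearMap.ker phi)
    (LinearMap.id - ((Module.projective_lifting_property phi LinearMap.id hphi).choose).comp phi)
    (by
      intro xx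
      have hs := (Module.projective_lifting_property phi LinearMap.id hphi).choose_spec
      have : phi ((Module.projective_lifting_property phi LinearMap.id
          hphi).choose (phi xx)) = phi xx := LinearMap.congr_fun hs (phi xx)
      simp [LinearMap.mem_ker, map_sub, this])

lemma kerRetraction_comp_subtype [Module.Projective R B] (phi : A →ₗ[R] B)
    (hphi : Function.Surjective phi) :
    (kerRetraction phi hphi).comp (LinearMap.ker phi).subtype = LinearMap.id := by
  ext ⟨k, hk⟩
  have : phi k = 0 := hk
  simp [kerRetraction, LinearMap.codRestrict_apply, this]

lemma ker_finite_of_split [Module.Projective R B] [Module.Finite R A] (phi : A →ₗ[R] B)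
    (hphi : Function.Surjective phi) : Module.Finite R (LinearMap.ker phi) :=
  Module.Finite.of_surjective (kerRetraction phi hphi) (fun k =>
    ⟨(LinearMap.ker phi).subtype k,
      by rw [← LinearMap.comp_apply, kerRetraction_comp_subtype]; rfl⟩)

lemma ker_projective_of_split [Module.Projective R B] [Module.Projective R A]
    (phi : A →ₗ[R] B) (hphi : Function.Surjective phi) :
    Module.Projective R (LinearMap.ker phi) :=
  Module.Projective.of_split (LinearMap.ker phi).subtype (kerRetraction phi hphi)
    (kerRetraction_comp_subtype phi hphi)

/-- A surjection onto a projective module splits, giving a product decomposition with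
its kernel. -/
noncomputable def splitEquivOfSurjective [Module.Projective R B] (phi : A →ₗ[R] B)
    (hphi : Function.Surjective phi) : A ≃ₗ[R] (LinearMap.ker phi) × B := by
  have hs : phi.comp (Module.projective_lifting_property phi LinearMap.id hphi).choose
      = LinearMap.id :=
    (Module.projective_lifting_property phi LinearMap.id hphi).choose_spec
  refine LinearEquiv.ofLinear ((kerRetraction phi hphi).prod phi)
    ((LinearMap.ker phi).subtype.comp (LinearMap.fst R _ B) +
      ((Module.projective_lifting_property phi LinearMap.id hphi).choose).comp
        (LinearMap.snd R _ B)) ?_ ?_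
  · refine LinearMap.ext fun p => ?_
    obtain ⟨⟨k, hk⟩, y⟩ := p
    have hphik : phi k = 0 := hk
    have hsy : phi ((Module.projective_lifting_property phi LinearMap.id hphi).choose y) = y :=
      LinearMap.congr_fun hs y
    refine Prod.ext (Subtype.ext ?_) ?_
    · simp [kerRetraction, LinearMap.codRestrict_apply, map_add, hphik, hsy]
    · simp [map_add, hphik, hsy]
  · refine LinearMap.ext fun xx => ?_
    simp [kerRetraction, LinearMap.codRestrict_apply]

end SplitAux

section MinAux

variable {R : Type*} [CommRing R] [Fintype (ConnectedComponents (PrimeSpectrum R))]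

/-- In a family of submodules of a finitely generated projective module over a ring whose
spectrum has finitely many connected components, all of whose quotients are finitely
generated projective, there is a member minimal among those it is comparable with. -/
theorem exists_min_ker {X : Type*} [AddCommGroup X] [Module R X] [Module.Finite R X]
    [Module.Projective R X] {S : Type*} [Nonempty S] (K : S → Submodule R X)
    (hfin : ∀ s, Module.Finite R (X ⧸ K s)) (hproj : ∀ s, Module.Projective R (X ⧸ K s)) :
    ∃ s₀ : S, ∀ s : S, K s ≤ K s₀ → K s = K s₀ := by
  classical
  set ρ : S → ℕ := fun s => totRank R (X ⧸ K s) with hρ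
  have hbdd : BddAbove (Set.range ρ) := by
    refine ⟨totRank R X, ?_⟩
    rintro _ ⟨s, rfl⟩
    haveI := hfin s; haveI := hproj s
    haveI := ker_finite_of_split ((K s).mkQ) (Submodule.mkQ_surjective _)
    haveI := ker_projective_of_split ((K s).mkQ) (Submodule.mkQ_surjective _)
    have := totRank_eq_add_of_equiv
      (splitEquivOfSurjective ((K s).mkQ) (Submodule.mkQ_surjective _))
    simp only [hρ]
    omega
  have hmem : sSup (Set.range ρ) ∈ Set.range ρ :=
    Nat.sSup_mem (Set.range_nonempty ρ) hbdd
  obtain ⟨s₀, hs₀⟩ := hmem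
  refine ⟨s₀, fun s hle => ?_⟩
  haveI := hfin s; haveI := hproj s; haveI := hfin s₀; haveI := hproj s₀
  set φ : (X ⧸ K s) →ₗ[R] (X ⧸ K s₀) :=
    Submodule.mapQ (K s) (K s₀) LinearMap.id (by simpa using hle) with hφ
  have hφsurj : Function.Surjective φ := by
    intro y
    obtain ⟨xx, rfl⟩ := Submodule.mkQ_surjective _ y
    exact ⟨(K s).mkQ xx, by simp [hφ, Submodule.mapQ_apply]⟩
  haveI := ker_finite_of_split φ hφsurj
  haveI := ker_projective_of_split φ hφsurj
  have hadd : ρ s = totRank R (LinearMap.ker φ) + ρ s₀ :=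
    totRank_eq_add_of_equiv (splitEquivOfSurjective φ hφsurj)
  have hle' : ρ s ≤ ρ s₀ := by
    rw [hs₀]; exact le_csSup hbdd ⟨s, rfl⟩
  have h0 : totRank R (LinearMap.ker φ) = 0 := by omega
  haveI hsub : Subsingleton (LinearMap.ker φ) := subsingleton_of_totRank_eq_zero _ h0
  have hker : LinearMap.ker φ = ⊥ := by
    rw [Submodule.eq_bot_iff]
    intro m hm
    have := hsub.elim ⟨m, hm⟩ ⟨0, Submodule.zero_mem _⟩
    exact congrArg Subtype.val this
  refine le_antisymm hle ?_
  intro m hm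
  have h1 : φ ((K s).mkQ m) = 0 := by
    simp only [hφ, Submodule.mkQ_apply, Submodule.mapQ_apply, LinearMap.id_apply]
    exact (Submodule.Quotient.mk_eq_zero _).mpr hm
  have h2 : (K s).mkQ m = 0 := by
    have : (K s).mkQ m ∈ LinearMap.ker φ := h1
    rw [hker] at this
    simpa using this
  simpa using (Submodule.Quotient.mk_eq_zero _).mp (by simpa using h2)

end MinAux

/-- **Vanishing of `lim¹` for inverse systems of finitely generated projective
modules over a lattice.**
Let `R` be a commutative ring whose spectrum has finitely many connected components,
and `(M i)` an inverse system of finitely generated projective `R`-modules indexed by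
a lattice `I` with surjective transition maps such that all the squares
`(M (i ⊔ j), M i, M j, M (i ⊓ j))` are Cartesian.  Then `lim¹ M i = 0`: every
cocycle is a coboundary, equivalently every torsor under the inverse system admits
a compatible family of points. -/
theorem statement8 {R : Type*} [CommRing R]
    (hcomp : Finite (ConnectedComponents (PrimeSpectrum R)))
    {I : Type*} [Lattice I]
    (M : I → Type*) [∀ i, AddCommGroup (M i)] [∀ i, Module R (M i)]
    [∀ i, Module.Finite R (M i)] [∀ i, Module.Projective R (M i)]
    (μ : ∀ ⦃j i : I⦄, j ≤ i → (M i →ₗ[R] M j))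
    (hrefl : ∀ (i : I) (h : i ≤ i), μ h = LinearMap.id)
    (htrans : ∀ ⦃k j i : I⦄ (hkj : k ≤ j) (hji : j ≤ i) (x : M i),
      μ hkj (μ hji x) = μ (hkj.trans hji) x)
    (hsurj : ∀ ⦃j i : I⦄ (h : j ≤ i), Function.Surjective (μ h))
    (hcart : ∀ (i j : I) (x : M i) (y : M j),
      μ (inf_le_left : i ⊓ j ≤ i) x = μ (inf_le_right : i ⊓ j ≤ j) y →
      ∃! w : M (i ⊔ j),
        μ (le_sup_left : i ≤ i ⊔ j) w = x ∧ μ (le_sup_right : j ≤ i ⊔ j) w = y) :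
    ∀ z : ∀ ⦃j i : I⦄, j ≤ i → M j,
      (∀ ⦃k j i : I⦄ (hkj : k ≤ j) (hji : j ≤ i),
        z (hkj.trans hji) = μ hkj (z hji) + z hkj) →
      ∃ b : ∀ i, M i, ∀ ⦃j i : I⦄ (h : j ≤ i), z h = μ h (b i) - b j := by
  classical
  cases nonempty_fintype (ConnectedComponents (PrimeSpectrum R))
  intro z hz
  -- basic cocycle identities
  have zco : ∀ {k j i : I} (hkj : k ≤ j) (hji : j ≤ i) (h : k ≤ i),
      μ hkj (z hji) = z h - z hkj := by
    intro k j i hkj hji h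
    exact eq_sub_iff_add_eq.mpr (hz hkj hji).symm
  -- the family of "good partial compatible families", as graphs
  set F : Set (Set ((i : I) × M i)) :=
    {G | (∀ (x : I) (m m' : M x), ⟨x, m⟩ ∈ G → ⟨x, m'⟩ ∈ G → m = m') ∧
      (∀ (x : I) (m : M x), ⟨x, m⟩ ∈ G → ∀ (y : I) (h : y ≤ x), ⟨y, μ h m - z h⟩ ∈ G) ∧
      (∀ (x y : I) (mx : M x) (my : M y), ⟨x, mx⟩ ∈ G → ⟨y, my⟩ ∈ G →
        ∃ w : M (x ⊔ y), ⟨x ⊔ y, w⟩ ∈ G)} with hF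
  have hF0 : (∅ : Set ((i : I) × M i)) ∈ F := by
    refine ⟨?_, ?_, ?_⟩
    · intro x m m' h; exact absurd h (Set.notMem_empty _)
    · intro x m h; exact absurd h (Set.notMem_empty _)
    · intro x y mx my h; exact absurd h (Set.notMem_empty _)
  have hchainub : ∀ c ⊆ F, IsChain (· ⊆ ·) c → c.Nonempty →
      ∃ ub ∈ F, ∀ s ∈ c, s ⊆ ub := by
    intro c hcF hchain hcne
    refine ⟨⋃₀ c, ⟨?_, ?_, ?_⟩, fun s hs => Set.subset_sUnion_of_mem hs⟩
    · rintro x m m' ⟨G1, hG1, hm⟩ ⟨G2, hG2, hm'⟩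
      rcases hchain.total hG1 hG2 with h | h
      · exact (hcF hG2).1 x m m' (h hm) hm'
      · exact (hcF hG1).1 x m m' hm (h hm')
    · rintro x m ⟨G1, hG1, hm⟩ y h
      exact ⟨G1, hG1, (hcF hG1).2.1 x m hm y h⟩
    · rintro x y mx my ⟨G1, hG1, hmx⟩ ⟨G2, hG2, hmy⟩
      rcases hchain.total hG1 hG2 with h | h
      · obtain ⟨w, hw⟩ := (hcF hG2).2.2 x y mx my (h hmx) hmy
        exact ⟨w, G2, hG2, hw⟩
      · obtain ⟨w, hw⟩ := (hcF hG1).2.2 x y mx my hmx (h hmy)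
        exact ⟨w, G1, hG1, hw⟩
  obtain ⟨G₀, -, hmax⟩ := zorn_subset_nonempty F hchainub ∅ hF0
  have hG₀F : G₀ ∈ F := hmax.1
  -- it suffices to show the domain of `G₀` is everything
  suffices hdom : ∀ x : I, ∃ m : M x, ⟨x, m⟩ ∈ G₀ by
    refine ⟨fun x => (hdom x).choose, ?_⟩
    intro j i h
    show z h = μ h ((hdom i).choose) - (hdom j).choose
    have h1 : ⟨j, μ h ((hdom i).choose) - z h⟩ ∈ G₀ :=
      hG₀F.2.1 i _ (hdom i).choose_spec j h
    have h2 := hG₀F.1 j _ _ (hdom j).choose_spec h1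
    rw [h2]; abel
  intro x
  by_contra hx
  -- the set of indices covered by `G₀`, and the partial family `b`
  by_cases hS : ∃ s m, (⟨s, m⟩ : (i : I) × M i) ∈ G₀
  case neg =>
    -- `G₀` is empty; extend by the principal ideal below `x`
    have hempty : G₀ = ∅ := by
      ext p
      simp only [Set.mem_empty_iff_false, iff_false]
      intro hp
      exact hS ⟨p.1, p.2, hp⟩
    set G' : Set ((i : I) × M i) := {p | ∃ h : p.1 ≤ x, p.2 = -z h} with hG'
    have hG'F : G' ∈ F := by
      refine ⟨?_, ?_, ?_⟩
      · rintro y m m' ⟨h1, e1⟩ ⟨h2, e2⟩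
        have e1' : m = -z h1 := e1
        have e2' : m' = -z h2 := e2
        rw [e1', e2']
      · rintro y m ⟨h1, e1⟩ y' h
        have e1' : m = -z h1 := e1
        refine ⟨h.trans h1, ?_⟩
        show μ h m - z h = -z (h.trans h1)
        rw [e1', map_neg, zco h h1 (h.trans h1)]
        abel
      · rintro y y' m m' ⟨h1, e1⟩ ⟨h2, e2⟩
        exact ⟨-z (sup_le h1 h2), ⟨sup_le h1 h2, rfl⟩⟩
    have hsub : G₀ ⊆ G' := by rw [hempty]; exact Set.empty_subset _
    have hsub' : G' ⊆ G₀ := hmax.2 hG'F hsub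
    exact hx ⟨-z (le_refl x), hsub' ⟨le_refl x, rfl⟩⟩
  case pos =>
  obtain ⟨s₁, m₁, hs₁⟩ := hS
  set S : Set I := {s | ∃ m : M s, ⟨s, m⟩ ∈ G₀} with hSdef
  obtain ⟨b, hb⟩ : ∃ b : ∀ y, M y, ∀ y (_ : y ∈ S), ⟨y, b y⟩ ∈ G₀ :=
    ⟨fun y => if hy : y ∈ S then hy.choose else 0,
     fun y hy => by simp only [dif_pos hy]; exact hy.choose_spec⟩
  have hSdown : ∀ {y y' : I}, y ∈ S → y' ≤ y → y' ∈ S := by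
    intro y y' hy h
    exact ⟨_, hG₀F.2.1 y _ (hb y hy) y' h⟩
  have hSsup : ∀ {y y' : I}, y ∈ S → y' ∈ S → y ⊔ y' ∈ S := by
    intro y y' hy hy'
    obtain ⟨w, hw⟩ := hG₀F.2.2 y y' _ _ (hb y hy) (hb y' hy')
    exact ⟨w, hw⟩
  have hcompat : ∀ {y y' : I} (hy : y ∈ S) (hy' : y' ∈ S) (h : y' ≤ y),
      μ h (b y) = b y' + z h := by
    intro y y' hy hy' h
    have h1 : ⟨y', μ h (b y) - z h⟩ ∈ G₀ := hG₀F.2.1 y _ (hb y hy) y' h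
    have h2 := hG₀F.1 y' _ _ (hb y' hy') h1
    rw [h2]; abel
  have hxS : x ∉ S := fun ⟨m, hm⟩ => hx ⟨m, hm⟩
  haveI : Nonempty ↥S := ⟨⟨s₁, m₁, hs₁⟩⟩
  -- the kernels of the transition maps below `x`
  set K : ↥S → Submodule R (M x) :=
    fun s => LinearMap.ker (μ (inf_le_left : x ⊓ (s : I) ≤ x)) with hK
  have hfin : ∀ s, Module.Finite R (M x ⧸ K s) := fun s =>
    Module.Finite.equiv (LinearMap.quotKerEquivOfSurjective _ (hsurj _)).symm
  have hproj : ∀ s, Module.Projective R (M x ⧸ K s) := fun s =>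
    Module.Projective.of_equiv (LinearMap.quotKerEquivOfSurjective
      (μ (inf_le_left : x ⊓ (s : I) ≤ x)) (hsurj _)).symm
  obtain ⟨s₀, hs₀min⟩ := exists_min_ker K hfin hproj
  -- choose the new value at `x`
  obtain ⟨bi, hbi⟩ := hsurj (inf_le_left : x ⊓ (s₀ : I) ≤ x)
    (b (x ⊓ (s₀ : I)) + z (inf_le_left : x ⊓ (s₀ : I) ≤ x))
  have claimA : ∀ s : ↥S, μ (inf_le_left : x ⊓ (s : I) ≤ x) bi
      = b (x ⊓ (s : I)) + z (inf_le_left : x ⊓ (s : I) ≤ x) := by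
    intro s
    set t : I := (s : I) ⊔ (s₀ : I) with ht
    have htS : t ∈ S := hSsup s.2 s₀.2
    have hsupt : (s₀ : I) ≤ t := le_sup_right
    have hinf : (x ⊓ (s₀ : I)) ≤ x ⊓ t := inf_le_inf_left x hsupt
    have hKle : K ⟨t, htS⟩ ≤ K s₀ := by
      intro m hm
      have hm' : μ (inf_le_left : x ⊓ t ≤ x) m = 0 := hm
      show μ (inf_le_left : x ⊓ (s₀ : I) ≤ x) m = 0
      rw [← htrans hinf (inf_le_left : x ⊓ t ≤ x) m, hm', map_zero]
    have hKt : K ⟨t, htS⟩ = K s₀ := hs₀min _ hKle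
    obtain ⟨w, hw⟩ := hsurj (inf_le_left : x ⊓ t ≤ x)
      (b (x ⊓ t) + z (inf_le_left : x ⊓ t ≤ x))
    have htSmem : x ⊓ t ∈ S := hSdown htS inf_le_right
    have hs₀mem : x ⊓ (s₀ : I) ∈ S := hSdown s₀.2 inf_le_right
    have hdiff : bi - w ∈ K s₀ := by
      show μ (inf_le_left : x ⊓ (s₀ : I) ≤ x) (bi - w) = 0
      rw [map_sub, hbi, ← htrans hinf (inf_le_left : x ⊓ t ≤ x) w, hw, map_add,
        hcompat htSmem hs₀mem hinf,
        zco hinf (inf_le_left : x ⊓ t ≤ x) (inf_le_left : x ⊓ (s₀ : I) ≤ x)]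
      abel
    have hdiff' : bi - w ∈ K ⟨t, htS⟩ := by rw [hKt]; exact hdiff
    have hbit : μ (inf_le_left : x ⊓ t ≤ x) bi = b (x ⊓ t) + z (inf_le_left : x ⊓ t ≤ x) := by
      have h0 : μ (inf_le_left : x ⊓ t ≤ x) (bi - w) = 0 := hdiff'
      rw [map_sub, sub_eq_zero] at h0
      rw [h0, hw]
    have hst : (x ⊓ (s : I)) ≤ x ⊓ t := inf_le_inf_left x le_sup_left
    have hsmem : x ⊓ (s : I) ∈ S := hSdown s.2 inf_le_right
    calc μ (inf_le_left : x ⊓ (s : I) ≤ x) bi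
        = μ hst (μ (inf_le_left : x ⊓ t ≤ x) bi) := (htrans hst _ bi).symm
      _ = μ hst (b (x ⊓ t)) + μ hst (z (inf_le_left : x ⊓ t ≤ x)) := by
          rw [hbit, map_add]
      _ = (b (x ⊓ (s : I)) + z hst)
            + (z (inf_le_left : x ⊓ (s : I) ≤ x) - z hst) := by
          rw [hcompat htSmem hsmem hst,
            zco hst (inf_le_left : x ⊓ t ≤ x) (inf_le_left : x ⊓ (s : I) ≤ x)]
      _ = b (x ⊓ (s : I)) + z (inf_le_left : x ⊓ (s : I) ≤ x) := by abel
  -- the Cartesian condition produces the values above `x`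
  have hcond : ∀ s : ↥S,
      μ (inf_le_left : x ⊓ (s : I) ≤ x) (bi + z (le_sup_left : x ≤ x ⊔ (s : I)))
        = μ (inf_le_right : x ⊓ (s : I) ≤ (s : I))
            (b (s : I) + z (le_sup_right : (s : I) ≤ x ⊔ (s : I))) := by
    intro s
    have hsmem : x ⊓ (s : I) ∈ S := hSdown s.2 inf_le_right
    have h1 : (x ⊓ (s : I)) ≤ x ⊔ (s : I) :=
      le_trans inf_le_left le_sup_left
    rw [map_add, map_add, claimA s, hcompat s.2 hsmem inf_le_right,
      zco (inf_le_left : x ⊓ (s : I) ≤ x) (le_sup_left : x ≤ x ⊔ (s : I)) h1,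
      zco (inf_le_right : x ⊓ (s : I) ≤ (s : I)) (le_sup_right : (s : I) ≤ x ⊔ (s : I)) h1]
    abel
  choose B hBspec using fun s : ↥S => hcart x (s : I) _ _ (hcond s)
  have hB1 : ∀ s : ↥S, μ (le_sup_left : x ≤ x ⊔ (s : I)) (B s)
      = bi + z (le_sup_left : x ≤ x ⊔ (s : I)) := fun s => (hBspec s).1.1
  have hB2 : ∀ s : ↥S, μ (le_sup_right : (s : I) ≤ x ⊔ (s : I)) (B s)
      = b (s : I) + z (le_sup_right : (s : I) ≤ x ⊔ (s : I)) := fun s => (hBspec s).1.2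
  have hBuniq : ∀ (s : ↥S) (w : M (x ⊔ (s : I))),
      (μ (le_sup_left : x ≤ x ⊔ (s : I)) w = bi + z (le_sup_left : x ≤ x ⊔ (s : I)) ∧
        μ (le_sup_right : (s : I) ≤ x ⊔ (s : I)) w
          = b (s : I) + z (le_sup_right : (s : I) ≤ x ⊔ (s : I))) → w = B s :=
    fun s w hw => (hBspec s).2 w hw
  have Bcompat : ∀ (s s' : ↥S) (hss' : (s : I) ≤ (s' : I)),
      μ (sup_le_sup_left hss' x) (B s') = B s + z (sup_le_sup_left hss' x) := by
    intro s s' hss'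
    have hsup : (x ⊔ (s : I)) ≤ x ⊔ (s' : I) := sup_le_sup_left hss' x
    have hxs' : x ≤ x ⊔ (s' : I) := le_sup_left
    have hss'2 : (s : I) ≤ x ⊔ (s' : I) := le_trans hss' le_sup_right
    have hP1 : μ (le_sup_left : x ≤ x ⊔ (s : I)) (μ hsup (B s') - z hsup)
        = bi + z (le_sup_left : x ≤ x ⊔ (s : I)) := by
      rw [map_sub, htrans (le_sup_left : x ≤ x ⊔ (s : I)) hsup (B s')]
      rw [show μ (Trans.trans (le_sup_left : x ≤ x ⊔ (s : I)) hsup) (B s')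
            = bi + z (le_sup_left : x ≤ x ⊔ (s' : I)) from hB1 s',
        zco (le_sup_left : x ≤ x ⊔ (s : I)) hsup hxs']
      abel
    have hP2 : μ (le_sup_right : (s : I) ≤ x ⊔ (s : I)) (μ hsup (B s') - z hsup)
        = b (s : I) + z (le_sup_right : (s : I) ≤ x ⊔ (s : I)) := by
      have e1 : μ (hss'2) (B s') = μ hss' (μ (le_sup_right : (s' : I) ≤ x ⊔ (s' : I)) (B s')) :=
        (htrans hss' (le_sup_right : (s' : I) ≤ x ⊔ (s' : I)) (B s')).symm
      rw [map_sub, htrans (le_sup_right : (s : I) ≤ x ⊔ (s : I)) hsup (B s')]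
      rw [show μ (Trans.trans (le_sup_right : (s : I) ≤ x ⊔ (s : I)) hsup) (B s')
            = μ hss' (μ (le_sup_right : (s' : I) ≤ x ⊔ (s' : I)) (B s')) from e1,
        hB2 s', map_add, hcompat s'.2 s.2 hss',
        zco hss' (le_sup_right : (s' : I) ≤ x ⊔ (s' : I)) hss'2,
        zco (le_sup_right : (s : I) ≤ x ⊔ (s : I)) hsup hss'2]
      abel
    have := hBuniq s _ ⟨hP1, hP2⟩
    rw [← this]; abel
  -- well-definedness of the extension
  have WDone : ∀ (s s' : ↥S) (hss' : (s : I) ≤ (s' : I)) (y : I)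
      (h : y ≤ x ⊔ (s : I)) (h' : y ≤ x ⊔ (s' : I)),
      μ h (B s) - z h = μ h' (B s') - z h' := by
    intro s s' hss' y h h'
    have hsup : (x ⊔ (s : I)) ≤ x ⊔ (s' : I) := sup_le_sup_left hss' x
    have e1 : μ h' (B s') = μ h (μ hsup (B s')) := (htrans h hsup (B s')).symm
    rw [e1, Bcompat s s' hss', map_add, zco h hsup h']
    abel
  have WD : ∀ (s s' : ↥S) (y : I) (h : y ≤ x ⊔ (s : I)) (h' : y ≤ x ⊔ (s' : I)),
      μ h (B s) - z h = μ h' (B s') - z h' := by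
    intro s s' y h h'
    have htS : (s : I) ⊔ (s' : I) ∈ S := hSsup s.2 s'.2
    set t : ↥S := ⟨(s : I) ⊔ (s' : I), htS⟩ with ht
    have h'' : y ≤ x ⊔ (t : I) := le_trans h (sup_le_sup_left le_sup_left x)
    exact (WDone s t le_sup_left y h h'').trans (WDone s' t le_sup_right y h' h'').symm
  -- the extended graph
  set G' : Set ((i : I) × M i) :=
    {p | ∃ (s : ↥S) (h : p.1 ≤ x ⊔ (s : I)), p.2 = μ h (B s) - z h} with hG'
  have hG'F : G' ∈ F := by
    refine ⟨?_, ?_, ?_⟩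
    · rintro y m m' ⟨s, h, e⟩ ⟨s', h', e'⟩
      have e1' : m = μ h (B s) - z h := e
      have e2' : m' = μ h' (B s') - z h' := e'
      rw [e1', e2']
      exact WD s s' y h h'
    · rintro y m ⟨s, hyx, e⟩ y' h
      have e1' : m = μ hyx (B s) - z hyx := e
      refine ⟨s, h.trans hyx, ?_⟩
      show μ h m - z h = μ (h.trans hyx) (B s) - z (h.trans hyx)
      rw [e1', map_sub, htrans h hyx (B s), zco h hyx (h.trans hyx)]
      rw [show μ (Trans.trans h hyx) (B s) = μ (h.trans hyx) (B s) from rfl]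
      abel
    · rintro y y' m m' ⟨s, hy, e⟩ ⟨s', hy', e'⟩
      have htS : (s : I) ⊔ (s' : I) ∈ S := hSsup s.2 s'.2
      have h'' : y ⊔ y' ≤ x ⊔ ((s : I) ⊔ (s' : I)) :=
        sup_le (le_trans hy (sup_le_sup_left le_sup_left x))
          (le_trans hy' (sup_le_sup_left le_sup_right x))
      exact ⟨μ h'' (B ⟨_, htS⟩) - z h'', ⟨⟨_, htS⟩, h'', rfl⟩⟩
  have hG₀G' : G₀ ⊆ G' := by
    intro p hp
    have hpS : p.1 ∈ S := ⟨p.2, hp⟩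
    refine ⟨⟨p.1, hpS⟩, le_sup_right, ?_⟩
    have h1 : p.2 = b p.1 := hG₀F.1 p.1 _ _ hp (hb p.1 hpS)
    show p.2 = μ (le_sup_right : p.1 ≤ x ⊔ p.1) (B ⟨p.1, hpS⟩) - z le_sup_right
    rw [h1, hB2 ⟨p.1, hpS⟩]
    abel
  have hsub' : G' ⊆ G₀ := hmax.2 hG'F hG₀G'
  exact hx ⟨μ (le_sup_left : x ≤ x ⊔ (s₀ : I)) (B s₀) - z (le_sup_left : x ≤ x ⊔ (s₀ : I)),
    hsub' ⟨s₀, le_sup_left, rfl⟩⟩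
end

section
/- Let R be a commutative ring, and for indices j ≤ i in a poset let μ_j^i : M_i → M_j be surjective R-linear maps between finitely generated projective R-modules such that for all i, j the square with vertices M_{i∨j}, M_i, M_j, M_{i∧j} is Cartesian. Then for all j, j' ≤ i: (a) ker(μ_j^i) ∩ ker(μ_{j'}^i) = ker(μ_{j∨j'}^i), and (b) μ_{j'}^i(ker(μ_j^i)) = ker(μ_{j∧j'}^{j'}). -/
/-- **Kernels of transition maps in a Cartesian inverse system.**
Let `(M i)` be an inverse system of finitely generated projective `R`-modules over a
lattice `I` with surjective transition maps `μ_j^i` such that all squares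
`(M (i ⊔ j), M i, M j, M (i ⊓ j))` are Cartesian.  Then for `j, j' ≤ i`:
(a) `ker(μ_j^i) ∩ ker(μ_{j'}^i) = ker(μ_{j ⊔ j'}^i)`, and
(b) `μ_{j'}^i(ker(μ_j^i)) = ker(μ_{j ⊓ j'}^{j'})`. -/
theorem statement9 {R : Type*} [CommRing R]
    {I : Type*} [Lattice I]
    (M : I → Type*) [∀ i, AddCommGroup (M i)] [∀ i, Module R (M i)]
    [∀ i, Module.Finite R (M i)] [∀ i, Module.Projective R (M i)]
    (μ : ∀ ⦃j i : I⦄, j ≤ i → (M i →ₗ[R] M j))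
    (hrefl : ∀ (i : I) (h : i ≤ i), μ h = LinearMap.id)
    (htrans : ∀ ⦃k j i : I⦄ (hkj : k ≤ j) (hji : j ≤ i) (x : M i),
      μ hkj (μ hji x) = μ (hkj.trans hji) x)
    (hsurj : ∀ ⦃j i : I⦄ (h : j ≤ i), Function.Surjective (μ h))
    (hcart : ∀ (i j : I) (x : M i) (y : M j),
      μ (inf_le_left : i ⊓ j ≤ i) x = μ (inf_le_right : i ⊓ j ≤ j) y →
      ∃! w : M (i ⊔ j),
        μ (le_sup_left : i ≤ i ⊔ j) w = x ∧ μ (le_sup_right : j ≤ i ⊔ j) w = y)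
    (i j j' : I) (hj : j ≤ i) (hj' : j' ≤ i) :
    LinearMap.ker (μ hj) ⊓ LinearMap.ker (μ hj') =
      LinearMap.ker (μ (sup_le hj hj' : j ⊔ j' ≤ i)) ∧
    Submodule.map (μ hj') (LinearMap.ker (μ hj)) =
      LinearMap.ker (μ (inf_le_right : j ⊓ j' ≤ j')) := by
  constructor
  · ext x
    simp only [Submodule.mem_inf, LinearMap.mem_ker]
    constructor
    · rintro ⟨h1, h2⟩
      obtain ⟨w, hw, huniq⟩ := hcart j j' (0 : M j) (0 : M j') (by simp)
      have hx : μ (le_sup_left : j ≤ j ⊔ j') (μ (sup_le hj hj') x) = 0 ∧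
          μ (le_sup_right : j' ≤ j ⊔ j') (μ (sup_le hj hj') x) = 0 := by
        rw [htrans, htrans]; exact ⟨h1, h2⟩
      have h0 : μ (le_sup_left : j ≤ j ⊔ j') (0 : M (j ⊔ j')) = 0 ∧
          μ (le_sup_right : j' ≤ j ⊔ j') (0 : M (j ⊔ j')) = 0 := by simp
      rw [huniq _ hx, huniq _ h0]
    · intro h
      constructor
      · rw [← htrans (le_sup_left : j ≤ j ⊔ j') (sup_le hj hj'), h, map_zero]
      · rw [← htrans (le_sup_right : j' ≤ j ⊔ j') (sup_le hj hj'), h, map_zero]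
  · ext y
    simp only [Submodule.mem_map, LinearMap.mem_ker]
    constructor
    · rintro ⟨x, hx, rfl⟩
      rw [htrans, ← htrans (inf_le_left : j ⊓ j' ≤ j) hj, hx, map_zero]
    · intro hy
      obtain ⟨w, ⟨hw1, hw2⟩, -⟩ := hcart j j' (0 : M j) y (by simpa using hy.symm)
      obtain ⟨x, hx⟩ := hsurj (sup_le hj hj' : j ⊔ j' ≤ i) w
      refine ⟨x, ?_, ?_⟩
      · rw [← htrans (le_sup_left : j ≤ j ⊔ j') (sup_le hj hj'), hx, hw1]
      · rw [← htrans (le_sup_right : j' ≤ j ⊔ j') (sup_le hj hj'), hx, hw2]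
end

section
/- Let R be a commutative ring such that Spec R is connected (R has no nontrivial idempotents), and let M be a finitely generated projective R-module. If N ⊆ N' are direct summands of M of equal (constant) rank, then N = N'. -/
section ProdLocalized

variable {R : Type*} [CommSemiring R] (S : Submonoid R)
variable {A A' B B' : Type*} [AddCommMonoid A] [AddCommMonoid A'] [AddCommMonoid B]
  [AddCommMonoid B'] [Module R A] [Module R A'] [Module R B] [Module R B']
  (f : A →ₗ[R] A') (g : B →ₗ[R] B') [IsLocalizedModule S f] [IsLocalizedModule S g]

theorem isLocalizedModule_prodMap10 : IsLocalizedModule S (f.prodMap g) where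
  map_units s := by
    have hf := (Module.End.isUnit_iff _).mp (IsLocalizedModule.map_units f s)
    have hg := (Module.End.isUnit_iff _).mp (IsLocalizedModule.map_units g s)
    rw [Module.End.isUnit_iff]
    constructor
    · rintro ⟨a, b⟩ ⟨c, d⟩ h
      simp only [Module.algebraMap_end_apply, Prod.smul_mk, Prod.mk.injEq] at h
      exact Prod.ext (hf.1 (by simpa using h.1)) (hg.1 (by simpa using h.2))
    · rintro ⟨x, y⟩
      obtain ⟨a, ha⟩ := hf.2 x
      obtain ⟨b, hb⟩ := hg.2 y
      exact ⟨(a, b), Prod.ext (by simpa using ha) (by simpa using hb)⟩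
  surj := by
    rintro ⟨x, y⟩
    obtain ⟨⟨a, s⟩, ha⟩ := IsLocalizedModule.surj S f x
    obtain ⟨⟨b, t⟩, hb⟩ := IsLocalizedModule.surj S g y
    simp only [Submonoid.smul_def] at ha hb
    refine ⟨⟨(t • a, s • b), s * t⟩, Prod.ext ?_ ?_⟩
    · show (s * t) • x = f (t • a)
      simp only [Submonoid.smul_def, Submonoid.coe_mul, map_smul]
      rw [mul_comm, mul_smul, ha]
    · show (s * t) • y = g (s • b)
      simp only [Submonoid.smul_def, Submonoid.coe_mul, map_smul]
      rw [mul_smul, hb]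
  exists_of_eq := by
    rintro ⟨a, b⟩ ⟨c, d⟩ h
    have h1 : f a = f c := congrArg Prod.fst h
    have h2 : g b = g d := congrArg Prod.snd h
    obtain ⟨s, hs⟩ := IsLocalizedModule.exists_of_eq (S := S) (f := f) h1
    obtain ⟨t, ht⟩ := IsLocalizedModule.exists_of_eq (S := S) (f := g) h2
    simp only [Submonoid.smul_def] at hs ht
    refine ⟨s * t, Prod.ext ?_ ?_⟩
    · show (s * t) • a = (s * t) • c
      simp only [Submonoid.smul_def, Submonoid.coe_mul]
      rw [mul_comm, mul_smul, mul_smul]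
      exact congrArg ((t : R) • ·) hs
    · show (s * t) • b = (s * t) • d
      simp only [Submonoid.smul_def, Submonoid.coe_mul]
      rw [mul_smul, mul_smul]
      exact congrArg ((s : R) • ·) ht

end ProdLocalized

section RankAdd

variable {R : Type*} [CommRing R] {A B C : Type*}
  [AddCommGroup A] [AddCommGroup B] [AddCommGroup C]
  [Module R A] [Module R B] [Module R C]

/-- Rank at stalk is additive for a module equivalent to a product. -/
theorem rankAtStalk_add_of_equiv10
    [Module.Finite R A] [Module.Projective R A]
    [Module.Finite R B] [Module.Projective R B]
    [Module.Finite R C] [Module.Projective R C]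
    (e : A ≃ₗ[R] B × C) (p : PrimeSpectrum R) :
    Module.rankAtStalk (R := R) A p
      = Module.rankAtStalk (R := R) B p + Module.rankAtStalk (R := R) C p := by
  classical
  set S : Submonoid R := p.asIdeal.primeCompl
  letI Rₚ := Localization S
  -- finite presentation instances
  haveI : Module.FinitePresentation R A := Module.finitePresentation_of_projective R A
  haveI : Module.FinitePresentation R B := Module.finitePresentation_of_projective R B
  haveI : Module.FinitePresentation R C := Module.finitePresentation_of_projective R C
  haveI : Module.Free Rₚ (LocalizedModule S A) := Module.free_of_flat_of_isLocalRing
  haveI : Module.Free Rₚ (LocalizedModule S B) := Module.free_of_flat_of_isLocalRing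
  haveI : Module.Free Rₚ (LocalizedModule S C) := Module.free_of_flat_of_isLocalRing
  -- the localized module of `A` is equivalent to the product of the localizations
  haveI hprod : IsLocalizedModule S
      ((LocalizedModule.mkLinearMap S B).prodMap (LocalizedModule.mkLinearMap S C)) :=
    isLocalizedModule_prodMap10 S _ _
  haveI : IsLocalizedModule S
      (((LocalizedModule.mkLinearMap S B).prodMap (LocalizedModule.mkLinearMap S C)).comp
        (e : A →ₗ[R] B × C)) :=
    IsLocalizedModule.of_linearEquiv_right S _ _
  let ι : LocalizedModule S A ≃ₗ[R]
      LocalizedModule S B × LocalizedModule S C :=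
    IsLocalizedModule.iso S
      (((LocalizedModule.mkLinearMap S B).prodMap (LocalizedModule.mkLinearMap S C)).comp
        (e : A →ₗ[R] B × C))
  let φ : LocalizedModule S A →ₗ[Rₚ]
      LocalizedModule S B × LocalizedModule S C :=
    ι.toLinearMap.extendScalarsOfIsLocalization S Rₚ
  have hbij : Function.Bijective φ := ι.bijective
  let ψ : LocalizedModule S A ≃ₗ[Rₚ]
      LocalizedModule S B × LocalizedModule S C := LinearEquiv.ofBijective φ hbij
  show Module.finrank Rₚ (LocalizedModule S A) = _
  rw [ψ.finrank_eq, Module.finrank_prod]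
  rfl

end RankAdd

section Aux

variable {R M : Type*} [CommRing R] [AddCommGroup M] [Module R M]

theorem finite_of_isCompl10 [Module.Finite R M] {N C : Submodule R M} (h : IsCompl N C) :
    Module.Finite R N := by
  refine Module.Finite.of_surjective (N.linearProjOfIsCompl C h) fun n => ⟨n, ?_⟩
  exact Submodule.linearProjOfIsCompl_apply_left h n

theorem projective_of_isCompl10 [Module.Projective R M] {N C : Submodule R M}
    (h : IsCompl N C) : Module.Projective R N :=
  Module.Projective.of_split N.subtype (N.projectionOnto C h)
    (by ext x; simp)

/-- A finite projective module all of whose stalk ranks vanish is trivial. -/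
theorem subsingleton_of_rankAtStalk_zero10 (A : Type*) [AddCommGroup A] [Module R A]
    [Module.Finite R A] [Module.Projective R A]
    (h : ∀ p : PrimeSpectrum R, Module.rankAtStalk (R := R) A p = 0) :
    Subsingleton A := by
  haveI : Module.FinitePresentation R A := Module.finitePresentation_of_projective R A
  refine Module.subsingleton_of_localization_maximal
    (Mₚ := fun (P : Ideal R) _ => LocalizedModule P.primeCompl A)
    (fun (P : Ideal R) _ => LocalizedModule.mkLinearMap P.primeCompl A) ?_
  intro P hP
  haveI : P.IsPrime := hP.isPrime
  set S : Submonoid R := P.primeCompl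
  letI Rₚ := Localization S
  haveI : Module.Free Rₚ (LocalizedModule S A) := Module.free_of_flat_of_isLocalRing
  have hrk : Module.finrank Rₚ (LocalizedModule S A) = 0 := h ⟨P, hP.isPrime⟩
  rw [Module.finrank_eq_card_chooseBasisIndex] at hrk
  haveI : IsEmpty (Module.Free.ChooseBasisIndex Rₚ (LocalizedModule S A)) := by
    rwa [← Fintype.card_eq_zero_iff]
  have b := Module.Free.chooseBasis Rₚ (LocalizedModule S A)
  haveI : Subsingleton (Module.Free.ChooseBasisIndex Rₚ (LocalizedModule S A) →₀ Rₚ) :=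
    ⟨fun a b => Finsupp.ext fun i => isEmptyElim i⟩
  exact b.repr.toEquiv.subsingleton

end Aux

/-- **Nested direct summands of equal rank coincide.**
Let `R` be a commutative ring with connected spectrum and `M` a finitely generated
projective `R`-module.  If `N ⊆ N'` are direct summands of `M` of equal (constant)
rank, then `N = N'`. -/
theorem statement10 {R M : Type*} [CommRing R] [AddCommGroup M] [Module R M]
    [Module.Finite R M] [Module.Projective R M]
    [ConnectedSpace (PrimeSpectrum R)]
    (N N' : Submodule R M)
    (hN : ∃ C : Submodule R M, IsCompl N C)
    (hN' : ∃ C : Submodule R M, IsCompl N' C)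
    (hle : N ≤ N')
    (hrank : ∀ p : PrimeSpectrum R,
      Module.rankAtStalk (R := R) N p = Module.rankAtStalk (R := R) N' p) :
    N = N' := by
  classical
  obtain ⟨C, hC⟩ := hN
  obtain ⟨C', hC'⟩ := hN'
  set Q : Submodule R M := C ⊓ N' with hQdef
  have hQle : Q ≤ N' := inf_le_right
  have hsup : N ⊔ Q = N' := by
    rw [hQdef, ← sup_inf_assoc_of_le C hle, hC.codisjoint.eq_top, top_inf_eq]
  have hdisj : N ⊓ Q = ⊥ := by
    rw [hQdef, ← inf_assoc, hC.disjoint.eq_bot, bot_inf_eq]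
  -- `Q` has a complement in `M`, namely `N ⊔ C'`
  have hcomplQ : IsCompl Q (N ⊔ C') := by
    constructor
    · rw [disjoint_iff]
      have h1 : (N ⊔ C') ⊓ N' = N := by
        rw [sup_inf_assoc_of_le C' hle, inf_comm C' N', hC'.disjoint.eq_bot, sup_bot_eq]
      calc Q ⊓ (N ⊔ C') = Q ⊓ ((N ⊔ C') ⊓ N') := by
            rw [inf_comm (N ⊔ C') N', ← inf_assoc, inf_eq_left.mpr hQle]
        _ = Q ⊓ N := by rw [h1]
        _ = ⊥ := by rw [inf_comm, hdisj]
    · rw [codisjoint_iff, ← sup_assoc, sup_comm Q N, hsup, hC'.codisjoint.eq_top]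
  -- finiteness and projectivity instances
  haveI : Module.Finite R N := finite_of_isCompl10 hC
  haveI : Module.Projective R N := projective_of_isCompl10 hC
  haveI : Module.Finite R N' := finite_of_isCompl10 hC'
  haveI : Module.Projective R N' := projective_of_isCompl10 hC'
  haveI : Module.Finite R Q := finite_of_isCompl10 hcomplQ
  haveI : Module.Projective R Q := projective_of_isCompl10 hcomplQ
  -- `N'` is equivalent to `N × Q`
  have hcompl₁ : IsCompl (N.comap N'.subtype) (Q.comap N'.subtype) := by
    constructor
    · rw [disjoint_iff, eq_bot_iff]
      rintro x ⟨hx1, hx2⟩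
      have : (x : M) ∈ N ⊓ Q := ⟨hx1, hx2⟩
      rw [hdisj] at this
      exact (Submodule.mem_bot _).mpr (Subtype.ext (by simpa using this))
    · rw [codisjoint_iff, eq_top_iff]
      rintro x -
      have hx : (x : M) ∈ N ⊔ Q := by rw [hsup]; exact x.2
      obtain ⟨y, hy, z, hz, hyz⟩ := Submodule.mem_sup.mp hx
      refine Submodule.mem_sup.mpr ⟨⟨y, hle hy⟩, hy, ⟨z, hQle hz⟩, hz, ?_⟩
      exact Subtype.ext (by simpa using hyz)
  let e : (N' : Submodule R M) ≃ₗ[R] N × Q :=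
    (Submodule.prodEquivOfIsCompl _ _ hcompl₁).symm ≪≫ₗ
      (LinearEquiv.prodCongr (Submodule.comapSubtypeEquivOfLe hle)
        (Submodule.comapSubtypeEquivOfLe hQle))
  have hadd : ∀ p : PrimeSpectrum R,
      Module.rankAtStalk (R := R) N' p
        = Module.rankAtStalk (R := R) N p + Module.rankAtStalk (R := R) Q p :=
    fun p => rankAtStalk_add_of_equiv10 e p
  have hQ0 : ∀ p : PrimeSpectrum R, Module.rankAtStalk (R := R) Q p = 0 := by
    intro p
    have h1 := hadd p
    have h2 := hrank p
    omega
  haveI : Subsingleton Q := subsingleton_of_rankAtStalk_zero10 Q hQ0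
  have hQbot : Q = ⊥ := by
    rw [eq_bot_iff]
    intro x hx
    have : (⟨x, hx⟩ : Q) = (0 : Q) := Subsingleton.elim _ _
    simpa using congrArg (Subtype.val) this
  rw [← hsup, hQbot, sup_bot_eq]
end

section
/- Let 0 → L → M → N → 0 be a sequence of filtered modules over a commutative ring R, where each of L, M, N carries a decreasing filtration by submodules and the maps respect filtrations. The following are equivalent: (i) the maps are strict (f(Fⁿ L) = Fⁿ M ∩ im(f), etc.) and the underlying sequence of modules is short exact; (ii) for all n ∈ ℤ the sequence 0 → Fⁿ L → Fⁿ M → Fⁿ N → 0 is exact; (iii) assuming additionally the filtrations are exhaustive and separated with only finitely many jumps, the sequence of associated graded modules 0 → gr L → gr M → gr N → 0 is exact, where gr M = ⊕ₙ Fⁿ M/F^{n+1} M, together with exactness of the underlying sequence. Prove the equivalence of (i) and (ii). -/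
private lemma exhaust_mem {R A : Type*} [CommRing R] [AddCommGroup A] [Module R A]
    (F : ℤ → Submodule R A) (hF : Antitone F) (hexh : ⨆ n, F n = ⊤) (x : A) :
    ∃ n, x ∈ F n := by
  have hx : x ∈ ⨆ n, F n := hexh ▸ Submodule.mem_top
  have hdir : Directed (· ≤ ·) F := fun m n =>
    ⟨min m n, hF (min_le_left m n), hF (min_le_right m n)⟩
  exact (Submodule.mem_iSup_of_directed F hdir).1 hx

/-- **Characterization of short exact sequences of filtered modules.**
Let `L → M → N` be filtration-respecting maps of filtered modules (decreasing
exhaustive separated filtrations).  The following are equivalent: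
(i) the maps are strict and the underlying sequence `0 → L → M → N → 0` is short
exact; (ii) for every `n` the sequence `0 → Fⁿ L → Fⁿ M → Fⁿ N → 0` is exact. -/
theorem statement16 {R L M N : Type*} [CommRing R]
    [AddCommGroup L] [Module R L] [AddCommGroup M] [Module R M]
    [AddCommGroup N] [Module R N]
    (FL : ℤ → Submodule R L) (FM : ℤ → Submodule R M) (FN : ℤ → Submodule R N)
    (hFL : Antitone FL) (hFM : Antitone FM) (hFN : Antitone FN)
    (hFLexh : ⨆ n, FL n = ⊤) (hFLsep : ⨅ n, FL n = ⊥)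
    (hFMexh : ⨆ n, FM n = ⊤) (hFMsep : ⨅ n, FM n = ⊥)
    (hFNexh : ⨆ n, FN n = ⊤) (hFNsep : ⨅ n, FN n = ⊥)
    (f : L →ₗ[R] M) (g : M →ₗ[R] N)
    (hf : ∀ n : ℤ, Submodule.map f (FL n) ≤ FM n)
    (hg : ∀ n : ℤ, Submodule.map g (FM n) ≤ FN n) :
    -- (i) strict morphisms and short exact underlying sequence
    (Function.Injective f ∧ Function.Surjective g ∧
        LinearMap.range f = LinearMap.ker g ∧
        (∀ n : ℤ, Submodule.map f (FL n) = FM n ⊓ LinearMap.range f) ∧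
        (∀ n : ℤ, Submodule.map g (FM n) = FN n ⊓ LinearMap.range g)) ↔
    -- (ii) each filtration step gives a short exact sequence
    (∀ n : ℤ,
        (∀ x ∈ FL n, f x = 0 → x = 0) ∧
        Submodule.map f (FL n) = FM n ⊓ LinearMap.ker g ∧
        Submodule.map g (FM n) = FN n) := by
  constructor
  · rintro ⟨hfinj, hgsurj, hrk, hsf, hsg⟩ n
    refine ⟨fun x _ hx => hfinj (by simpa using hx), ?_, ?_⟩
    · rw [hsf n, hrk]
    · rw [hsg n, LinearMap.range_eq_top.2 hgsurj, inf_top_eq]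
  · intro h
    have hfinj : Function.Injective f := by
      rw [injective_iff_map_eq_zero]
      intro x hx
      obtain ⟨n, hn⟩ := exhaust_mem FL hFL hFLexh x
      exact (h n).1 x hn hx
    have hgsurj : Function.Surjective g := by
      intro y
      obtain ⟨n, hn⟩ := exhaust_mem FN hFN hFNexh y
      rw [← (h n).2.2] at hn
      obtain ⟨x, _, hx⟩ := hn
      exact ⟨x, hx⟩
    have hrk : LinearMap.range f = LinearMap.ker g := by
      apply le_antisymm
      · rintro _ ⟨x, rfl⟩
        obtain ⟨n, hn⟩ := exhaust_mem FL hFL hFLexh x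
        have : f x ∈ Submodule.map f (FL n) := ⟨x, hn, rfl⟩
        rw [(h n).2.1] at this
        exact this.2
      · intro y hy
        obtain ⟨n, hn⟩ := exhaust_mem FM hFM hFMexh y
        have : y ∈ Submodule.map f (FL n) := by
          rw [(h n).2.1]; exact ⟨hn, hy⟩
        obtain ⟨x, _, hx⟩ := this
        exact ⟨x, hx⟩
    refine ⟨hfinj, hgsurj, hrk, fun n => by rw [(h n).2.1, hrk], fun n => by
      rw [(h n).2.2, LinearMap.range_eq_top.2 hgsurj, inf_top_eq]⟩
end

section
/- Let R be a commutative ring and M a finitely generated projective R-module with a decreasing exhaustive separated filtration (Fⁿ M) such that each Fⁿ M is a direct summand of M and each quotient M/Fⁿ M is finitely generated projective. Define a filtration on the dual module M* = Hom_R(M, R) by Fⁿ M* = (F^{1-n} M)^⊥ = {f ∈ M* : f(F^{1-n} M) = 0}. Then the evaluation map ev : M ⊗ M* → R and the coevaluation map δ : R → M* ⊗ M make M* into a dual of M in the symmetric monoidal category of filtered R-modules, where the tensor filtration is Fⁿ(M ⊗ N) = Σ_{i+j=n} im(Fⁱ M ⊗ Fʲ N). Concretely: ev maps Fⁿ(M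 ⊗ M*) into Fⁿ R (where F⁰ R = R, F¹ R = 0), and δ(1) ∈ F⁰(M* ⊗ M). -/
open TensorProduct

lemma exists_dual_basis (R M : Type*) [CommRing R] [AddCommGroup M] [Module R M]
    [Module.Finite R M] [Module.Projective R M] :
    ∃ (k : ℕ) (e : Fin k → M) (g : Fin k → Module.Dual R M),
      ∀ m : M, ∑ i, g i m • e i = m := by
  obtain ⟨k, f, hf⟩ := Module.Finite.exists_fin' R M
  obtain ⟨σ, hσ⟩ := Module.projective_lifting_property f LinearMap.id hf
  refine ⟨k, fun i => f (Pi.single i (1 : R)), fun i => (LinearMap.proj i).comp σ, fun m => ?_⟩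
  have h1 : ∀ i : Fin k, σ m i • (Pi.single i (1 : R) : Fin k → R) = Pi.single i (σ m i) := by
    intro i; ext j
    by_cases h : j = i
    · subst h; simp
    · simp [Pi.single_eq_of_ne h]
  calc ∑ i, ((LinearMap.proj i).comp σ) m • f (Pi.single i (1 : R))
      = f (∑ i, σ m i • (Pi.single i (1 : R) : Fin k → R)) := by
        rw [map_sum]; simp [map_smul]
    _ = f (σ m) := by rw [show (∑ i, σ m i • (Pi.single i (1 : R) : Fin k → R)) = σ m by
          simp_rw [h1]; exact Finset.univ_sum_single (σ m)]
    _ = m := congrFun (congrArg (fun g : M →ₗ[R] M => (g : M → M)) hσ) m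

/-- Downward filtered dual-basis construction. -/
lemma filtered_dual_basis {R M : Type*} [CommRing R] [AddCommGroup M] [Module R M]
    [Module.Finite R M] [Module.Projective R M]
    (F : ℤ → Submodule R M) (hF : Antitone F)
    (a : ℤ) (ha : F a = ⊤)
    (hsummand : ∀ n : ℤ, ∃ C : Submodule R M, IsCompl (F n) C) :
    ∀ n : ℤ, a ≤ n → ∃ (p : M →ₗ[R] M) (L : List (Module.Dual R M × M × ℤ)),
      (∀ m : M, p m ∈ F n) ∧ (∀ m ∈ F n, p m = m) ∧
      (∀ x ∈ L, x.2.1 ∈ F x.2.2 ∧ ∀ y ∈ F (x.2.2 + 1), x.1 y = 0) ∧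
      (∀ m : M, (L.map fun x => x.1 m • x.2.1).sum = m - p m) := by
  intro n hn
  refine Int.le_induction (motive := fun n _ => ∃ (p : M →ₗ[R] M) (L : List (Module.Dual R M × M × ℤ)),
      (∀ m : M, p m ∈ F n) ∧ (∀ m ∈ F n, p m = m) ∧
      (∀ x ∈ L, x.2.1 ∈ F x.2.2 ∧ ∀ y ∈ F (x.2.2 + 1), x.1 y = 0) ∧
      (∀ m : M, (L.map fun x => x.1 m • x.2.1).sum = m - p m)) ?_ ?_ n hn
  · exact ⟨LinearMap.id, [], fun m => ha ▸ Submodule.mem_top, fun m _ => rfl,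
      by simp, by simp⟩
  · intro n hn ih
    obtain ⟨p, L, hp1, hp2, hL1, hL2⟩ := ih
    obtain ⟨C, hC⟩ := hsummand (n + 1)
    set π := (F (n + 1)).linearProjOfIsCompl C hC with hπ
    set q : M →ₗ[R] M := (F (n + 1)).subtype ∘ₗ π ∘ₗ p with hq
    set r : M →ₗ[R] M := p - q with hr
    obtain ⟨k, e, g, hdb⟩ := exists_dual_basis R M
    -- q is the projection onto F (n+1)
    have hq1 : ∀ m : M, q m ∈ F (n + 1) := fun m => (π (p m)).2
    have hq2 : ∀ m ∈ F (n + 1), q m = m := by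
      intro m hm
      have hmn : m ∈ F n := hF (by omega) hm
      simp only [hq, LinearMap.comp_apply, hp2 m hmn]
      rw [show (F (n + 1)).linearProjOfIsCompl C hC m = ⟨m, hm⟩ from
        Submodule.projectionOnto_apply_of_mem_left hC hm]
      rfl
    -- r kills F (n+1), lands in F n, is idempotent
    have hr0 : ∀ m ∈ F (n + 1), r m = 0 := by
      intro m hm
      simp only [hr, LinearMap.sub_apply, hq2 m hm, hp2 m (hF (by omega) hm), sub_self]
    have hrF : ∀ m : M, r m ∈ F n := fun m =>
      Submodule.sub_mem _ (hp1 m) (hF (by omega) (hq1 m))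
    have hrC : ∀ m : M, r m ∈ C := by
      intro m
      have : r m = p m - (π (p m) : M) := rfl
      rw [this]
      have hdec : ((F (n+1)).linearProjOfIsCompl C hC (p m) : M) +
          (C.linearProjOfIsCompl (F (n+1)) hC.symm (p m) : M) = p m :=
        Submodule.projection_add_projection_eq_self hC (p m)
      rw [show p m - (π (p m) : M) = (C.linearProjOfIsCompl (F (n+1)) hC.symm (p m) : M) from
        (eq_sub_of_add_eq' hdec).symm]
      exact (C.linearProjOfIsCompl (F (n+1)) hC.symm (p m)).2
    have hrid : ∀ m : M, r (r m) = r m := by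
      intro m
      have h1 : p (r m) = r m := hp2 _ (hrF m)
      have h2 : π (r m) = 0 := by
        exact Submodule.projectionOnto_apply_of_mem_right hC (hrC m)
      simp only [hr, LinearMap.sub_apply, hq, LinearMap.comp_apply] at h1 h2 ⊢
      rw [h1, h2]
      simp
    refine ⟨q, L ++ List.ofFn (fun i => ((g i).comp r, r (e i), n)), hq1, hq2, ?_, ?_⟩
    · intro x hx
      rcases List.mem_append.mp hx with h | h
      · exact hL1 x h
      · obtain ⟨i, rfl⟩ := List.mem_ofFn.mp h
        exact ⟨hrF (e i), fun y hy => by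
          simp only [LinearMap.comp_apply, hr0 y hy, map_zero]⟩
    · intro m
      rw [List.map_append, List.sum_append, hL2 m]
      have : (List.ofFn (fun i => ((g i).comp r, r (e i), n))).map
          (fun x => x.1 m • x.2.1) = List.ofFn (fun i => g i (r m) • r (e i)) := by
        simp [List.map_ofFn]; rfl
      rw [this, List.sum_ofFn]
      have : ∑ i, g i (r m) • r (e i) = r m := by
        rw [show (∑ i, g i (r m) • r (e i)) = r (∑ i, g i (r m) • e i) by
          rw [map_sum]; simp [map_smul]]
        rw [hdb (r m), hrid]
      rw [this]
      simp only [hr, LinearMap.sub_apply]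
      abel


/-- **The dual filtration makes the dual module a dual in the category of filtered
modules.**
Let `M` be a finitely generated projective `R`-module with a decreasing exhaustive
separated filtration `F` by direct summands with finitely generated projective
quotients.  Equip the dual `M* = Hom(M, R)` with the filtration
`Fⁿ M* = (F^{1-n} M)^⊥` and tensor products with the filtration
`Fⁿ(M ⊗ N) = Σ_{i+j=n} Fⁱ M ⊗ Fʲ N`.  Then the evaluation `ev : M ⊗ M* → R` maps
`Fⁿ(M ⊗ M*)` into `Fⁿ R` (so is zero on `Fⁿ` for `n ≥ 1`), and there is a
coevaluation element `c = δ(1) ∈ F⁰(M* ⊗ M)` witnessing the duality: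
`Σ fᵢ(m)·eᵢ = m` for all `m`. -/
theorem statement17 {R M : Type*} [CommRing R] [AddCommGroup M] [Module R M]
    [Module.Finite R M] [Module.Projective R M]
    (F : ℤ → Submodule R M) (hF : Antitone F)
    (a b : ℤ) (ha : ∀ i ≤ a, F i = ⊤) (hb : ∀ i, b ≤ i → F i = ⊥)
    (hsummand : ∀ n : ℤ, ∃ C : Submodule R M, IsCompl (F n) C)
    (hquotproj : ∀ n : ℤ, Module.Projective R (M ⧸ F n))
    (hquotfin : ∀ n : ℤ, Module.Finite R (M ⧸ F n)) :
    -- dual filtration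
    letI FD : ℤ → Submodule R (Module.Dual R M) :=
      fun n => (F (1 - n)).dualAnnihilator
    -- tensor filtration on M ⊗ M*
    letI FT : ℤ → Submodule R (M ⊗[R] Module.Dual R M) :=
      fun n => ⨆ i : ℤ,
        LinearMap.range (TensorProduct.map (F i).subtype (FD (n - i)).subtype)
    -- tensor filtration on M* ⊗ M
    letI FT' : ℤ → Submodule R (Module.Dual R M ⊗[R] M) :=
      fun n => ⨆ i : ℤ,
        LinearMap.range (TensorProduct.map (FD i).subtype (F (n - i)).subtype)
    -- evaluation respects the filtrations: `ev(Fⁿ(M ⊗ M*)) ⊆ Fⁿ R = 0` for `n ≥ 1`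
    (∀ n : ℤ, 1 ≤ n → ∀ x ∈ FT n, contractRight R M x = 0) ∧
    -- coevaluation: `δ(1) ∈ F⁰(M* ⊗ M)` and it witnesses the duality
    (∃ c ∈ FT' 0, ∀ m : M,
      TensorProduct.lift ((LinearMap.lsmul R M).comp (LinearMap.applyₗ m)) c = m) := by
  refine ⟨?_, ?_⟩
  · -- evaluation part
    intro n hn x hx
    have hle : (⨆ i : ℤ,
        LinearMap.range (TensorProduct.map (F i).subtype ((F (1 - (n - i))).dualAnnihilator).subtype)) ≤
        LinearMap.ker (contractRight R M) := by
      apply iSup_le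
      intro i
      rintro z ⟨y, rfl⟩
      induction y using TensorProduct.induction_on with
      | zero => simp
      | tmul m f =>
        simp only [TensorProduct.map_tmul, LinearMap.mem_ker, Submodule.coe_subtype,
          contractRight_apply]
        have hm : (m : M) ∈ F (1 - (n - i)) := hF (by omega) m.2
        exact (Submodule.mem_dualAnnihilator _).mp f.2 _ hm
      | add y₁ y₂ h₁ h₂ =>
        simp only [map_add, LinearMap.mem_ker] at h₁ h₂ ⊢
        rw [h₁, h₂, add_zero]
    exact hle hx
  · -- coevaluation part
    obtain ⟨p, L, hp1, hp2, hL1, hL2⟩ :=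
      filtered_dual_basis F hF a (ha a le_rfl) hsummand (max a b) (le_max_left _ _)
    have hbot : F (max a b) = ⊥ := hb _ (le_max_right _ _)
    have hp0 : ∀ m : M, p m = 0 := fun m => by
      have := hp1 m; rwa [hbot, Submodule.mem_bot] at this
    refine ⟨(L.map fun x => x.1 ⊗ₜ[R] x.2.1).sum, ?_, ?_⟩
    · apply AddSubmonoid.list_sum_mem
      intro y hy
      obtain ⟨x, hx, rfl⟩ := List.mem_map.mp hy
      obtain ⟨hx1, hx2⟩ := hL1 x hx
      have hmem1 : x.1 ∈ (F (1 - -x.2.2)).dualAnnihilator := by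
        rw [Submodule.mem_dualAnnihilator]
        intro y hy
        exact hx2 y (by rwa [show x.2.2 + 1 = 1 - -x.2.2 by ring])
      have hmem2 : x.2.1 ∈ F (0 - -x.2.2) := by
        rwa [show (0 : ℤ) - -x.2.2 = x.2.2 by ring]
      have : x.1 ⊗ₜ[R] x.2.1 ∈ LinearMap.range
          (TensorProduct.map ((F (1 - -x.2.2)).dualAnnihilator).subtype (F (0 - -x.2.2)).subtype) :=
        ⟨(⟨x.1, hmem1⟩ : (F (1 - -x.2.2)).dualAnnihilator) ⊗ₜ[R] (⟨x.2.1, hmem2⟩ : F (0 - -x.2.2)), rfl⟩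
      exact le_iSup (fun i : ℤ => LinearMap.range
        (TensorProduct.map ((F (1 - i)).dualAnnihilator).subtype (F (0 - i)).subtype)) (-x.2.2) this
    · intro m
      rw [map_list_sum, List.map_map]
      have : (TensorProduct.lift ((LinearMap.lsmul R M).comp (LinearMap.applyₗ m)) ∘
          fun x : Module.Dual R M × M × ℤ => x.1 ⊗ₜ[R] x.2.1) =
          fun x : Module.Dual R M × M × ℤ => x.1 m • x.2.1 := by
        funext x
        simp [TensorProduct.lift.tmul]
      rw [this, hL2 m, hp0 m, sub_zero]
end
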